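/- arXiv:1102.5438 — 5 statements merged into one kernel-verified Lean document; each statement's English description precedes it below -/
import Mathlib

section
/- For every n there exists a nonrepetitive sequence of length n over a 3-element alphabet (Thue's theorem). -/
/-- A 1-indexed sequence `s` has a repetition within its first `n` terms. -/
def HasRepetition {α : Type*} (s : ℕ → α) (n : ℕ) : Prop :=
  ∃ i h, 1 ≤ i ∧ 1 ≤ h ∧ i + 2 * h - 1 ≤ n ∧ ∀ j < h, s (i + j) = s (i + h + j)

namespace ThueAux

/-- The Thue–Morse sequence: parity of the binary digit sum. -/
def t (n : ℕ) : Bool := (Nat.digits 2 n).sum % 2 == 1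

lemma t_even (n : ℕ) : t (2 * n) = t n := by
  rcases Nat.eq_zero_or_pos n with rfl | hn
  · rfl
  · unfold t
    rw [Nat.digits_def' (by norm_num : (1:ℕ) < 2) (by omega : 0 < 2 * n)]
    simp [Nat.mul_div_cancel_left _ (by norm_num : (0:ℕ) < 2), Nat.mul_mod_right]

lemma t_odd (n : ℕ) : t (2 * n + 1) = !t n := by
  unfold t
  rw [Nat.digits_def' (by norm_num : (1:ℕ) < 2) (by omega : 0 < 2 * n + 1)]
  have h1 : (2 * n + 1) % 2 = 1 := by omega
  have h2 : (2 * n + 1) / 2 = n := by omega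
  rw [h1, h2]
  rcases Nat.mod_two_eq_zero_or_one (Nat.digits 2 n).sum with h | h <;>
    simp [List.sum_cons, Nat.add_mod, h]

lemma adj (k : ℕ) : t (2 * k) ≠ t (2 * k + 1) := by
  rw [t_even, t_odd]
  cases t k <;> simp

lemma adj_odd {m : ℕ} (hm : t m = t (m + 1)) : m % 2 = 1 := by
  rcases Nat.even_or_odd m with ⟨k, hk⟩ | ⟨k, hk⟩
  · exfalso
    apply adj k
    rw [show 2 * k = m by omega]
    exact hm
  · omega

/-- Thue–Morse is overlap-free. -/
lemma no_overlap : ∀ h, 0 < h → ∀ i, ¬ (∀ j ≤ h, t (i + j) = t (i + h + j)) := by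
  intro h
  induction h using Nat.strong_induction_on with
  | _ h ih =>
    intro hpos i hov
    rcases Nat.even_or_odd h with ⟨m, hm⟩ | ⟨m, hm⟩
    · -- h even : reduce to half
      have hm1 : 0 < m := by omega
      apply ih m (by omega) hm1 (i / 2)
      intro j' hj'
      rcases Nat.even_or_odd i with ⟨i', hi⟩ | ⟨i', hi⟩
      · have hd : i / 2 = i' := by omega
        have h1 := hov (2 * j') (by omega)
        rw [show i + 2 * j' = 2 * (i' + j') by omega,
            show i + h + 2 * j' = 2 * (i' + m + j') by omega, t_even, t_even] at h1
        rw [hd]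
        exact h1
      · have hd : i / 2 = i' := by omega
        have h1 := hov (2 * j') (by omega)
        rw [show i + 2 * j' = 2 * (i' + j') + 1 by omega,
            show i + h + 2 * j' = 2 * (i' + m + j') + 1 by omega, t_odd, t_odd] at h1
        rw [hd]
        exact Bool.not_inj h1
    · -- h odd
      by_cases hex : ∃ j, j < h ∧ t (i + j) = t (i + j + 1)
      · obtain ⟨j, hj, hadj⟩ := hex
        have o1 : (i + j) % 2 = 1 := adj_odd hadj
        have e1 := hov j (by omega)
        have e2 := hov (j + 1) (by omega)
        have hadj2 : t (i + h + j) = t (i + h + j + 1) := by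
          rw [← e1, hadj]
          exact e2
        have o2 : (i + h + j) % 2 = 1 := adj_odd hadj2
        omega
      · push_neg at hex
        have step : ∀ j, j < h → t (i + j + 1) = !t (i + j) := by
          intro j hj
          have := hex j hj
          revert this
          cases t (i + j + 1) <;> cases t (i + j) <;> simp
        have alt : ∀ m', m' ≤ h → t (i + m') = xor ((m' % 2 == 1) : Bool) (t i) := by
          intro m'
          induction m' with
          | zero => simp
          | succ k ihk =>
            intro hk
            have h1 : t (i + (k + 1)) = !t (i + k) := by
              have := step k (by omega)
              rw [show i + k + 1 = i + (k + 1) by omega] at this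
              exact this
            rw [h1, ihk (by omega)]
            have e : (((k + 1) % 2 == 1) : Bool) = !((k % 2 == 1) : Bool) := by
              rcases Nat.mod_two_eq_zero_or_one k with h0 | h0 <;>
                simp [Nat.add_mod, h0]
            rw [e]
            cases ((k % 2 == 1) : Bool) <;> cases t i <;> rfl
        have h0 := hov 0 (by omega)
        simp only [Nat.add_zero] at h0
        have h1 := alt h le_rfl
        rw [show (h % 2 == 1) = true by simp; omega] at h1
        rw [← h0] at h1
        revert h1
        cases t i <;> simp

/-- Thue–Morse value as an integer. -/
def T (n : ℕ) : ℤ := if t n then 1 else 0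

/-- A squarefree ternary sequence derived from Thue–Morse. -/
def s (n : ℕ) : Fin 3 := if t n = t (n + 1) then 0 else if t n then 1 else 2

lemma delta_eq {a b : ℕ} (hs : s a = s b) : T (a + 1) - T a = T (b + 1) - T b := by
  unfold s at hs
  unfold T
  cases ha : t a <;> cases ha1 : t (a + 1) <;> cases hb : t b <;> cases hb1 : t (b + 1) <;>
    simp_all

lemma step_eq {a b : ℕ} (hs : s a = s b) (h : t a = t b) : t (a + 1) = t (b + 1) := by
  unfold s at hs
  cases ha : t a <;> cases ha1 : t (a + 1) <;> cases hb : t b <;> cases hb1 : t (b + 1) <;>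
    simp_all

lemma base_eq {i h : ℕ} (hh : 0 < h) (hrep : ∀ j < h, s (i + j) = s (i + h + j)) :
    t i = t (i + h) := by
  have tel1 : ∑ j ∈ Finset.range h, (T (i + j + 1) - T (i + j)) = T (i + h) - T i := by
    have := Finset.sum_range_sub (f := fun j => T (i + j)) h
    simpa [add_assoc] using this
  have tel2 : ∑ j ∈ Finset.range h, (T (i + h + j + 1) - T (i + h + j))
      = T (i + h + h) - T (i + h) := by
    have := Finset.sum_range_sub (f := fun j => T (i + h + j)) h
    simpa [add_assoc] using this
  have hsum : T (i + h) - T i = T (i + h + h) - T (i + h) := by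
    rw [← tel1, ← tel2]
    apply Finset.sum_congr rfl
    intro j hj
    exact delta_eq (hrep j (Finset.mem_range.mp hj))
  unfold T at hsum
  cases h1 : t i <;> cases h2 : t (i + h) <;> cases h3 : t (i + h + h) <;> simp_all

theorem s_squarefree (i h : ℕ) (hh : 0 < h) :
    ¬ (∀ j < h, s (i + j) = s (i + h + j)) := by
  intro hrep
  apply no_overlap h hh i
  intro j hj
  induction j with
  | zero => simpa using base_eq hh hrep
  | succ k ihk =>
    have hk : k < h := by omega
    have h1 : t (i + k) = t (i + h + k) := ihk (by omega)
    have := step_eq (hrep k hk) h1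
    rw [show i + k + 1 = i + (k + 1) by omega,
        show i + h + k + 1 = i + h + (k + 1) by omega] at this
    exact this

end ThueAux

/-- Thue's theorem: for every `n` there exists a nonrepetitive sequence of
length `n` over a 3-element alphabet. -/
theorem thue_nonrepetitive_ternary (n : ℕ) :
    ∃ s : ℕ → Fin 3, ¬ HasRepetition s n := by
  refine ⟨ThueAux.s, ?_⟩
  rintro ⟨i, h, hi, hh, hb, hrep⟩
  exact ThueAux.s_squarefree i h hh hrep
end

section
/- For every k ≥ 1, at least k + 2 symbols are needed to create arbitrarily long sequences that are nonrepetitive up to mod k; that is, M(k) ≥ k + 2. Concretely: for every k ≥ 1 there exists N such that no sequence of length N over an alphabet of size k + 1 is nonrepetitive up to mod k. -/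
/-- A 1-indexed sequence `s` of length `n` is nonrepetitive up to mod `k`:
for every common difference `d ∈ {1, ..., k}`, no arithmetic subsequence with
difference `d` contains two identical adjacent blocks. -/
def NonrepetitiveUpToMod {α : Type*} (k : ℕ) (s : ℕ → α) (n : ℕ) : Prop :=
  ∀ d i h, 1 ≤ d → d ≤ k → 1 ≤ i → 1 ≤ h → i + (2 * h - 1) * d ≤ n →
    ¬ ∀ t < h, s (i + t * d) = s (i + (h + t) * d)

/-- `M(k) ≥ k + 2`: for every `k ≥ 1` there is `N` such that no sequence of
length `N` over an alphabet of `k + 1` symbols is nonrepetitive up to mod `k`. -/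
theorem M_ge_k_add_two (k : ℕ) (hk : 1 ≤ k) :
    ∃ N : ℕ, ∀ s : ℕ → Fin (k + 1), ¬ NonrepetitiveUpToMod k s N := by
  refine ⟨2 * k + 3, fun s hs => ?_⟩
  -- Step 1: no two equal symbols within distance ≤ k.
  have hdist : ∀ i d, 1 ≤ i → 1 ≤ d → d ≤ k → i + d ≤ 2 * k + 3 → s i ≠ s (i + d) := by
    intro i d hi hd hdk hle heq
    refine hs d i 1 hd hdk hi le_rfl (by omega) ?_
    intro t ht
    interval_cases t
    simpa using heq
  -- Step 2: periodicity with period k + 1.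
  have hper : ∀ i, 1 ≤ i → i + (k + 1) ≤ 2 * k + 3 → s i = s (i + (k + 1)) := by
    intro i hi hle
    obtain ⟨a, b, hab, heq⟩ :=
      Fintype.exists_ne_map_eq_of_card_lt (fun j : Fin (k + 2) => s (i + j)) (by simp)
    rcases lt_or_gt_of_ne hab with hlt | hlt
    · -- a < b
      rcases Nat.lt_or_ge (b.val - a.val) (k + 1) with hd | hd
      · exfalso
        have h1 : (1:ℕ) ≤ i + a.val := by omega
        have := hdist (i + a.val) (b.val - a.val) h1 (by omega) (by omega)
          (by have := b.isLt; omega)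
        apply this
        have hb : i + a.val + (b.val - a.val) = i + b.val := by omega
        rw [hb]; exact heq
      · -- b - a = k + 1, so a = 0, b = k + 1
        have ha : a.val = 0 := by have := b.isLt; omega
        have hb : b.val = k + 1 := by have := b.isLt; omega
        have : s (i + a.val) = s (i + b.val) := heq
        rw [ha, hb] at this; simpa using this
    · rcases Nat.lt_or_ge (a.val - b.val) (k + 1) with hd | hd
      · exfalso
        have h1 : (1:ℕ) ≤ i + b.val := by omega
        have := hdist (i + b.val) (a.val - b.val) h1 (by omega) (by omega)
          (by have := a.isLt; omega)
        apply this
        have hb : i + b.val + (a.val - b.val) = i + a.val := by omega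
        rw [hb]; exact heq.symm
      · have hbv : b.val = 0 := by have := a.isLt; omega
        have hav : a.val = k + 1 := by have := a.isLt; omega
        have : s (i + b.val) = s (i + a.val) := heq.symm
        rw [hbv, hav] at this; simpa using this
  -- Step 3: period k+1 gives a repetition with d = 1, h = k + 1.
  refine hs 1 1 (k + 1) le_rfl hk le_rfl (by omega) (by omega) ?_
  intro t ht
  have h1 : 1 + t * 1 = 1 + t := by ring
  have h2 : 1 + (k + 1 + t) * 1 = 1 + t + (k + 1) := by ring
  rw [h1, h2]
  exact hper (1 + t) (by omega) (by omega)
end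

section
/- For every positive integers n and k, and every sequence of finite sets (lists) L_1, ..., L_n each of size at least 2k + 10⌈√k⌉, there exists a sequence S = s_1 ... s_n with s_i ∈ L_i for all i, such that S is nonrepetitive up to mod k. -/
open Finset

namespace NRep

variable {α : Type*}

def Rep (σ : ℕ → α) (i d h : ℕ) : Prop := ∀ t < h, σ (i + t * d) = σ (i + (h + t) * d)

def Good (k : ℕ) (I : Finset ℕ) (σ : ℕ → α) : Prop :=
  ∀ i d h, 1 ≤ d → d ≤ k → 1 ≤ h → (∀ j < 2 * h, i + j * d ∈ I) → ¬ Rep σ i d h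

noncomputable def SS (L : ℕ → Finset α) (d0 : α) (I : Finset ℕ) : Finset (ℕ → α) :=
  @Finset.image _ _ (Classical.decEq _) (fun f i => if h : i ∈ I then f i h else d0)
    (I.pi (fun i => L i))

noncomputable def G (k : ℕ) (L : ℕ → Finset α) (d0 : α) (I : Finset ℕ) : Finset (ℕ → α) :=
  @Finset.filter _ (Good k I) (Classical.decPred _) (SS L d0 I)

noncomputable def C (k : ℕ) (L : ℕ → Finset α) (d0 : α) (I : Finset ℕ) : ℕ := (G k L d0 I).card

lemma mem_SS {L : ℕ → Finset α} {d0 : α} {I : Finset ℕ} {σ : ℕ → α} :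
    σ ∈ SS L d0 I ↔ (∀ i ∈ I, σ i ∈ L i) ∧ ∀ i ∉ I, σ i = d0 := by
  classical
  constructor
  · intro hσ
    rw [SS, Finset.mem_image] at hσ
    obtain ⟨f, hf, rfl⟩ := hσ
    rw [Finset.mem_pi] at hf
    constructor
    · intro i hi; simp [hi, hf]
    · intro i hi; simp [hi]
  · rintro ⟨h1, h2⟩
    rw [SS, Finset.mem_image]
    refine ⟨fun i _ => σ i, ?_, ?_⟩
    · rw [Finset.mem_pi]; exact fun a ha => h1 a ha
    · funext i
      by_cases hi : i ∈ I <;> simp [hi, h2]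

lemma mem_G {k : ℕ} {L : ℕ → Finset α} {d0 : α} {I : Finset ℕ} {σ : ℕ → α} :
    σ ∈ G k L d0 I ↔ ((∀ i ∈ I, σ i ∈ L i) ∧ ∀ i ∉ I, σ i = d0) ∧ Good k I σ := by
  classical
  unfold G
  rw [Finset.mem_filter, mem_SS]

/-- Restriction: erasing one point preserves membership. -/
lemma restrict_mem {k : ℕ} {L : ℕ → Finset α} {d0 : α} {I : Finset ℕ} {σ : ℕ → α}
    (hσ : σ ∈ G k L d0 I) (p : ℕ) :
    Function.update σ p d0 ∈ G k L d0 (I.erase p) := by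
  rw [mem_G] at hσ ⊢
  obtain ⟨⟨h1, h2⟩, hg⟩ := hσ
  refine ⟨⟨?_, ?_⟩, ?_⟩
  · intro i hi
    rw [Finset.mem_erase] at hi
    rw [Function.update_of_ne hi.1]
    exact h1 i hi.2
  · intro i hi
    rcases eq_or_ne i p with rfl | hne
    · simp
    · rw [Function.update_of_ne hne]
      exact h2 i (fun hiI => hi (Finset.mem_erase.2 ⟨hne, hiI⟩))
  · intro i d h hd hdk hh hpos hrep
    refine hg i d h hd hdk hh (fun j hj => Finset.mem_of_mem_erase (hpos j hj)) ?_
    intro t ht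
    have e1 : i + t * d ≠ p := Finset.ne_of_mem_erase (hpos t (by omega))
    have e2 : i + (h + t) * d ≠ p := Finset.ne_of_mem_erase (hpos (h + t) (by omega))
    have := hrep t ht
    rwa [Function.update_of_ne e1, Function.update_of_ne e2] at this


noncomputable def Nset (k : ℕ) (L : ℕ → Finset α) (d0 : α) (J T : Finset ℕ)
    (i d h : ℕ) : Finset (ℕ → α) :=
  @Finset.filter _ (fun σ => ∀ t ∈ T, σ (i + t * d) = σ (i + (h + t) * d))
    (Classical.decPred _) (G k L d0 J)

lemma mem_Nset {k : ℕ} {L : ℕ → Finset α} {d0 : α} {J T : Finset ℕ} {i d h : ℕ} {σ : ℕ → α} :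
    σ ∈ Nset k L d0 J T i d h ↔
      σ ∈ G k L d0 J ∧ ∀ t ∈ T, σ (i + t * d) = σ (i + (h + t) * d) := by
  unfold Nset
  exact @Finset.mem_filter _ _ (Classical.decPred _) _ _

lemma pos_inj {d i j1 j2 : ℕ} (hd : 1 ≤ d) (e : i + j1 * d = i + j2 * d) : j1 = j2 := by
  have e2 := Nat.add_left_cancel e
  exact Nat.eq_of_mul_eq_mul_right hd e2

lemma peel (k n : ℕ) (L : ℕ → Finset α) (d0 : α) (β M : ℕ)
    (ihmain : ∀ J ⊆ Icc 1 n, J.card < M → ∀ p ∈ Icc 1 n, p ∉ J →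
      β * C k L d0 J ≤ C k L d0 (insert p J)) :
    ∀ (c : ℕ) (T J : Finset ℕ), T.card = c → J ⊆ Icc 1 n → J.card ≤ M →
    ∀ i d h : ℕ, 1 ≤ d → (∀ t ∈ T, t < h) → (∀ t ∈ T, i + t * d ∈ J ∧ i + (h + t) * d ∈ J) →
    β ^ c * (Nset k L d0 J T i d h).card ≤ C k L d0 J := by
  classical
  intro c
  induction c with
  | zero =>
    intro T J hTc hJ hJM i d h hd hTh hTJ
    have hsub : Nset k L d0 J T i d h ⊆ G k L d0 J := fun σ hσ => (mem_Nset.mp hσ).1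
    simpa [C] using Finset.card_le_card hsub
  | succ c ih =>
    intro T J hTc hJ hJM i d h hd hTh hTJ
    obtain ⟨t, ht⟩ : T.Nonempty := Finset.card_pos.mp (by omega)
    have hth : t < h := hTh t ht
    have hh : 1 ≤ h := by omega
    set p := i + (h + t) * d with hp
    have hpJ : p ∈ J := (hTJ t ht).2
    set J' := J.erase p with hJ'
    set T' := T.erase t with hT'
    -- index distinctness facts
    have hne1 : ∀ t' : ℕ, t' < h → i + t' * d ≠ p := by
      intro t' ht' e
      have := pos_inj hd e
      omega
    have hne2 : ∀ t' : ℕ, t' ≠ t → i + (h + t') * d ≠ p := by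
      intro t' ht' e
      have := pos_inj hd e
      omega
    set N := Nset k L d0 J T i d h with hN
    set N' := Nset k L d0 J' T' i d h with hN'
    have hmap : ∀ σ ∈ N, Function.update σ p d0 ∈ N' := by
      intro σ hσ
      rw [hN, mem_Nset] at hσ
      obtain ⟨hσG, hσE⟩ := hσ
      rw [hN', mem_Nset]
      refine ⟨restrict_mem hσG p, ?_⟩
      intro t' ht'
      have ht'T : t' ∈ T := Finset.mem_of_mem_erase ht'
      have h1 : i + t' * d ≠ p := hne1 t' (hTh t' ht'T)
      have h2 : i + (h + t') * d ≠ p := hne2 t' (Finset.ne_of_mem_erase ht')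
      rw [Function.update_of_ne h1, Function.update_of_ne h2]
      exact hσE t' ht'T
    have hinj : Set.InjOn (fun σ : ℕ → α => Function.update σ p d0) ↑N := by
      intro σ1 hσ1 σ2 hσ2 he
      replace hσ1 := mem_Nset.mp (Finset.mem_coe.mp hσ1)
      replace hσ2 := mem_Nset.mp (Finset.mem_coe.mp hσ2)
      have e1 : σ1 p = σ1 (i + t * d) := (hσ1.2 t ht).symm
      have e2 : σ2 p = σ2 (i + t * d) := (hσ2.2 t ht).symm
      funext x
      rcases eq_or_ne x p with rfl | hx
      · have hxt : i + t * d ≠ p := hne1 t hth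
        have := congrFun he (i + t * d)
        simp only [Function.update_of_ne hxt] at this
        rw [e1, e2, this]
      · have := congrFun he x
        simpa only [Function.update_of_ne hx] using this
    have hcard : N.card ≤ N'.card :=
      Finset.card_le_card_of_injOn _ hmap hinj
    have hT'c : T'.card = c := by
      rw [hT', Finset.card_erase_of_mem ht, hTc]
      omega
    have hcardJ' : J'.card < J.card := Finset.card_erase_lt_of_mem hpJ
    have ihspec := ih T' J' hT'c (fun x hx => hJ (Finset.mem_of_mem_erase hx)) (by omega)
      i d h hd (fun t' ht' => hTh t' (Finset.mem_of_mem_erase ht'))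
      (by
        intro t' ht'
        have ht'T : t' ∈ T := Finset.mem_of_mem_erase ht'
        constructor
        · exact Finset.mem_erase.2 ⟨hne1 t' (hTh t' ht'T), (hTJ t' ht'T).1⟩
        · exact Finset.mem_erase.2 ⟨hne2 t' (Finset.ne_of_mem_erase ht'), (hTJ t' ht'T).2⟩)
    have hmain := ihmain J' (fun x hx => hJ (Finset.mem_of_mem_erase hx)) (by omega)
      p (hJ hpJ) (Finset.notMem_erase _ _)
    rw [Finset.insert_erase hpJ] at hmain
    calc β ^ (c + 1) * N.card = β * (β ^ c * N.card) := by ring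
      _ ≤ β * (β ^ c * N'.card) := by
          exact Nat.mul_le_mul_left _ (Nat.mul_le_mul_left _ hcard)
      _ ≤ β * C k L d0 J' := Nat.mul_le_mul_left _ ihspec
      _ ≤ C k L d0 J := hmain


lemma num_aux (k w n Cv : ℕ) (hw : 1 ≤ w) (hkw : k ≤ w * w) :
    k * ∑ h ∈ Icc 1 n, 2 * h * (Cv / (3 * w) ^ (h - 1)) ≤ (2 * k + 7 * w) * Cv := by
  have hw' : (1:ℚ) ≤ (w:ℚ) := by exact_mod_cast hw
  have hβ : (2:ℚ) < 3 * w := by linarith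
  have hx0 : (0:ℚ) ≤ 2 / (3 * w) := by positivity
  have hx1 : (2:ℚ) / (3 * w) < 1 := by
    rw [div_lt_one (by linarith)]; linarith
  have h1x : (0:ℚ) < 1 - 2 / (3 * w) := by linarith
  rw [← Nat.cast_le (α := ℚ)]
  push_cast
  have hterm : ∀ h ∈ Icc 1 n,
      (2 * (h:ℚ) * ((Cv / (3 * w) ^ (h - 1) : ℕ) : ℚ)) ≤ 2 * Cv * (2 / (3 * (w:ℚ))) ^ (h - 1) := by
    intro h hh
    have h1 : ((Cv / (3 * w) ^ (h - 1) : ℕ) : ℚ) ≤ (Cv : ℚ) / ((3:ℚ) * w) ^ (h - 1) := by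
      have := Nat.cast_div_le (α := ℚ) (m := Cv) (n := (3 * w) ^ (h - 1))
      rwa [Nat.cast_pow, Nat.cast_mul, Nat.cast_ofNat] at this
    have h2 : (h:ℚ) ≤ 2 ^ (h - 1) := by
      have h3 : h - 1 < 2 ^ (h - 1) := Nat.lt_two_pow_self
      have : h ≤ 2 ^ (h - 1) := by omega
      exact_mod_cast this
    have hb0 : (0:ℚ) < ((3:ℚ) * w) ^ (h - 1) := by positivity
    calc 2 * (h:ℚ) * ((Cv / (3 * w) ^ (h - 1) : ℕ) : ℚ)
        ≤ 2 * (h:ℚ) * ((Cv : ℚ) / ((3:ℚ) * w) ^ (h - 1)) := by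
          have hh0 : (0:ℚ) ≤ 2 * (h:ℚ) := by positivity
          exact mul_le_mul_of_nonneg_left h1 hh0
      _ ≤ 2 * (2:ℚ) ^ (h - 1) * ((Cv : ℚ) / ((3:ℚ) * w) ^ (h - 1)) := by
          apply mul_le_mul_of_nonneg_right (by linarith) (by positivity)
      _ = 2 * Cv * (2 / (3 * (w:ℚ))) ^ (h - 1) := by
          rw [div_pow]
          field_simp
  have hsum1 := Finset.sum_le_sum hterm
  have hsum2 : ∑ h ∈ Icc 1 n, 2 * (Cv:ℚ) * (2 / (3 * (w:ℚ))) ^ (h - 1)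
      = 2 * Cv * ∑ j ∈ range n, (2 / (3 * (w:ℚ))) ^ j := by
    rw [← Finset.mul_sum]
    congr 1
    rw [← Finset.Ico_add_one_right_eq_Icc, Finset.sum_Ico_eq_sum_range]
    simp
  have hgeom : ∑ j ∈ range n, (2 / (3 * (w:ℚ))) ^ j ≤ 1 / (1 - 2 / (3 * w)) := by
    rw [geom_sum_eq (ne_of_lt hx1)]
    have heq : ((2 / (3 * (w:ℚ))) ^ n - 1) / (2 / (3 * w) - 1)
        = (1 - (2 / (3 * (w:ℚ))) ^ n) / (1 - 2 / (3 * w)) := by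
      rw [← neg_div_neg_eq]; congr 1 <;> ring
    rw [heq]
    have hpn : (0:ℚ) ≤ (2 / (3 * (w:ℚ))) ^ n := by positivity
    gcongr
    linarith
  have hk' : (k:ℚ) ≤ (w:ℚ) * w := by exact_mod_cast hkw
  have hCv0 : (0:ℚ) ≤ (Cv:ℚ) := Nat.cast_nonneg Cv
  have hfinal : (k:ℚ) * (2 * Cv * (1 / (1 - 2 / (3 * w)))) ≤ (2 * k + 7 * w) * Cv := by
    have hone : (1:ℚ) / (1 - 2 / (3 * w)) = 3 * w / (3 * w - 2) := by
      rw [div_eq_div_iff (ne_of_gt h1x) (show (3*(w:ℚ)-2) ≠ 0 by intro hc; nlinarith)]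
      field_simp
    rw [hone]
    rw [show (k:ℚ) * (2 * Cv * (3 * w / (3 * w - 2))) = (6 * k * Cv * w) / (3 * w - 2) by ring]
    rw [div_le_iff₀ (by linarith)]
    have hw0 : (0:ℚ) ≤ (w:ℚ) := by linarith
    have hA : (0:ℚ) ≤ (Cv:ℚ) * ((w:ℚ) * w - k) := mul_nonneg hCv0 (by linarith)
    have hB : (0:ℚ) ≤ (Cv:ℚ) * ((w:ℚ) * ((w:ℚ) - 1)) := mul_nonneg hCv0 (mul_nonneg hw0 (by linarith))
    have hC : (0:ℚ) ≤ (Cv:ℚ) * ((w:ℚ) * w) := mul_nonneg hCv0 (mul_nonneg hw0 hw0)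
    nlinarith [hA, hB, hC]
  calc (k:ℚ) * ∑ h ∈ Icc 1 n, (2 * (h:ℚ) * ((Cv / (3 * w) ^ (h - 1) : ℕ) : ℚ))
      ≤ (k:ℚ) * (2 * Cv * (1 / (1 - 2 / (3 * w)))) := by
        apply mul_le_mul_of_nonneg_left _ (Nat.cast_nonneg k)
        calc ∑ h ∈ Icc 1 n, (2 * (h:ℚ) * ((Cv / (3 * w) ^ (h - 1) : ℕ) : ℚ))
            ≤ 2 * Cv * ∑ j ∈ range n, (2 / (3 * (w:ℚ))) ^ j := by rw [← hsum2]; exact hsum1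
          _ ≤ 2 * Cv * (1 / (1 - 2 / (3 * w))) := by
              apply mul_le_mul_of_nonneg_left hgeom (by positivity)
    _ ≤ (2 * (k:ℚ) + 7 * w) * Cv := hfinal


lemma main_lemma (n k w : ℕ) (L : ℕ → Finset α) (d0 : α)
    (hw : 1 ≤ w) (hkw : k ≤ w * w)
    (hL : ∀ i ∈ Icc 1 n, 2 * k + 10 * w ≤ (L i).card) :
    ∀ M : ℕ, ∀ I : Finset ℕ, I ⊆ Icc 1 n → I.card < M → ∀ q ∈ Icc 1 n, q ∉ I →
      3 * w * C k L d0 I ≤ C k L d0 (insert q I) := by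
  intro M
  induction M with
  | zero => intro I _ hcard; omega
  | succ M ih =>
    intro I hI hIM q hq hqI
    classical
    have hq1 : 1 ≤ q := (Finset.mem_Icc.mp hq).1
    have hqn : q ≤ n := (Finset.mem_Icc.mp hq).2
    have hIcc : ∀ x ∈ insert q I, x ∈ Icc 1 n := by
      intro x hx
      rcases Finset.mem_insert.mp hx with rfl | hx'
      · exact hq
      · exact hI hx'
    -- fiber decomposition
    have hres : ∀ τ ∈ G k L d0 (insert q I), Function.update τ q d0 ∈ G k L d0 I := by
      intro τ hτ
      have := restrict_mem hτ q
      rwa [Finset.erase_insert hqI] at this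
    have hfib : C k L d0 (insert q I) = ∑ σ ∈ G k L d0 I,
        ((G k L d0 (insert q I)).filter (fun τ => Function.update τ q d0 = σ)).card :=
      Finset.card_eq_sum_card_fiberwise hres
    -- good and bad extension values
    set goodv : (ℕ → α) → Finset α :=
      fun σ => (L q).filter (fun a => Good k (insert q I) (Function.update σ q a)) with hgoodv
    set badv : (ℕ → α) → Finset α :=
      fun σ => (L q).filter (fun a => ¬ Good k (insert q I) (Function.update σ q a)) with hbadv
    have hsplit : ∀ σ : ℕ → α, (goodv σ).card + (badv σ).card = (L q).card := by
      intro σ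
      exact Finset.card_filter_add_card_filter_not _
    have hgoodinj : ∀ σ ∈ G k L d0 I, (goodv σ).card ≤
        ((G k L d0 (insert q I)).filter (fun τ => Function.update τ q d0 = σ)).card := by
      intro σ hσ
      obtain ⟨⟨hσL, hσ0⟩, hσG⟩ := mem_G.mp hσ
      apply Finset.card_le_card_of_injOn (fun a => Function.update σ q a)
      · intro a ha
        obtain ⟨haL, haG⟩ := Finset.mem_filter.mp ha
        rw [Finset.mem_coe, Finset.mem_filter]
        beta_reduce
        constructor
        · rw [mem_G]
          refine ⟨⟨?_, ?_⟩, haG⟩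
          · intro i hi
            rcases Finset.mem_insert.mp hi with rfl | hi'
            · rw [Function.update_self]; exact haL
            · have : i ≠ q := by rintro rfl; exact hqI hi'
              rw [Function.update_of_ne this]; exact hσL i hi'
          · intro i hi
            have h1 : i ≠ q := by rintro rfl; exact hi (Finset.mem_insert_self _ _)
            have h2 : i ∉ I := fun h' => hi (Finset.mem_insert_of_mem h')
            rw [Function.update_of_ne h1]; exact hσ0 i h2
        · funext x
          rcases eq_or_ne x q with rfl | hx
          · rw [Function.update_self, (hσ0 x hqI)]
          · rw [Function.update_of_ne hx, Function.update_of_ne hx]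
      · intro a1 h1 a2 h2 he
        have := congrFun he q
        simpa [Function.update_self] using this
    have step1 : ∑ σ ∈ G k L d0 I, (goodv σ).card ≤ C k L d0 (insert q I) := by
      rw [hfib]
      exact Finset.sum_le_sum hgoodinj
    -- pattern set
    set Pall : Finset (ℕ × ℕ × ℕ) := ((Icc 1 k) ×ˢ (Icc 1 n) ×ˢ (range (2 * n))).filter
      (fun p => p.2.2 < 2 * p.2.1 ∧ p.2.2 * p.1 < q ∧
        ∀ j < 2 * p.2.1, (q - p.2.2 * p.1) + j * p.1 ∈ insert q I) with hPall
    set OE : (ℕ → α) → ℕ × ℕ × ℕ → Prop := fun σ p =>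
      ∀ t < p.2.1, t ≠ p.2.2 → p.2.1 + t ≠ p.2.2 →
        σ ((q - p.2.2 * p.1) + t * p.1) = σ ((q - p.2.2 * p.1) + (p.2.1 + t) * p.1) with hOE
    set ptn : ℕ × ℕ × ℕ → ℕ := fun p => if p.2.2 < p.2.1 then q + p.2.1 * p.1 else q - p.2.1 * p.1
      with hptn
    -- Claim D : bad values are covered by patterns
    have hbadsub : ∀ σ ∈ G k L d0 I,
        badv σ ⊆ (Pall.filter (fun p => OE σ p)).image (fun p => σ (ptn p)) := by
      intro σ hσ a ha
      obtain ⟨haL, hbad⟩ := Finset.mem_filter.mp ha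
      unfold Good at hbad
      push_neg at hbad
      obtain ⟨i, d, h, hd1, hdk, hh1, hposs, hrep⟩ := hbad
      unfold Rep at hrep
      have hi1 : 1 ≤ i := by
        have h0 := hIcc _ (hposs 0 (by omega))
        rw [zero_mul, add_zero] at h0
        exact (Finset.mem_Icc.mp h0).1
      have hlast : i + (2 * h - 1) * d ≤ n := (Finset.mem_Icc.mp (hIcc _ (hposs (2*h-1) (by omega)))).2
      have hhn : h ≤ n := by
        have hmul : 2 * h - 1 ≤ (2 * h - 1) * d := Nat.le_mul_of_pos_right _ (by omega)
        have key : ∀ u : ℕ, 2 * h - 1 ≤ u → i + u ≤ n → h ≤ n := by intros u h1 h2; omega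
        exact key _ hmul hlast
      -- the pattern must pass through q
      have hrex : ∃ r, r < 2 * h ∧ i + r * d = q := by
        by_contra hcon
        push_neg at hcon
        refine (mem_G.mp hσ).2 i d h hd1 hdk hh1 ?_ ?_
        · intro j hj
          rcases Finset.mem_insert.mp (hposs j hj) with hjq | hjI
          · exact absurd hjq (hcon j hj)
          · exact hjI
        · intro t ht
          have e := hrep t ht
          rw [Function.update_of_ne (hcon t (by omega)),
            Function.update_of_ne (hcon (h + t) (by omega))] at e
          exact e
      obtain ⟨r, hr2h, hirq⟩ := hrex
      have huniq : ∀ j, i + j * d = q → j = r := by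
        intro j e
        exact pos_inj hd1 (by rw [e, hirq])
      have hrdlt : r * d < q := by
        have h1 : 1 + r * d ≤ i + r * d := Nat.add_le_add_right hi1 _
        rw [hirq] at h1
        omega
      have hqrd : q - r * d = i := by omega
      have hmemP : (d, h, r) ∈ Pall := by
        rw [hPall, Finset.mem_filter]
        constructor
        · rw [Finset.mem_product]
          refine ⟨Finset.mem_Icc.mpr ⟨hd1, hdk⟩, ?_⟩
          rw [Finset.mem_product]
          exact ⟨Finset.mem_Icc.mpr ⟨hh1, hhn⟩, Finset.mem_range.mpr (show r < 2 * n by omega)⟩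
        · refine ⟨hr2h, hrdlt, ?_⟩
          intro j hj
          rw [hqrd]
          exact hposs j hj
      have hOEσ : OE σ (d, h, r) := by
        rw [hOE]
        intro t ht ht1 ht2
        simp only at ht ht1 ht2 ⊢
        have e := hrep t ht
        have n1 : i + t * d ≠ q := fun ec => ht1 (huniq t ec)
        have n2 : i + (h + t) * d ≠ q := fun ec => ht2 (huniq (h + t) ec)
        rw [Function.update_of_ne n1, Function.update_of_ne n2] at e
        rw [hqrd]
        exact e
      have haval : a = σ (ptn (d, h, r)) := by
        rw [hptn]
        simp only
        by_cases hrh : r < h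
        · rw [if_pos hrh]
          have e := hrep r hrh
          have n2 : i + (h + r) * d ≠ q := fun ec => by
            have := huniq (h + r) ec
            omega
          rw [hirq, Function.update_self, Function.update_of_ne n2] at e
          have epos : i + (h + r) * d = q + h * d := by
            rw [← hirq]
            ring
          rw [epos] at e
          exact e
        · rw [if_neg hrh]
          have hrh' : h ≤ r := Nat.not_lt.mp hrh
          have e := hrep (r - h) (by omega)
          have hh' : h + (r - h) = r := by omega
          rw [hh'] at e
          have n1 : i + (r - h) * d ≠ q := fun ec => by
            have := huniq (r - h) ec
            omega
          rw [hirq, Function.update_of_ne n1, Function.update_self] at e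
          have epos : i + (r - h) * d = q - h * d := by
            have hmle : h * d ≤ r * d := Nat.mul_le_mul_right d hrh'
            rw [← hirq, Nat.sub_mul, Nat.add_sub_assoc hmle]
          rw [epos] at e
          exact e.symm
      exact Finset.mem_image.mpr ⟨(d, h, r), Finset.mem_filter.mpr ⟨hmemP, hOEσ⟩, haval.symm⟩
    -- count bad values via patterns
    have hbadcard : ∀ σ ∈ G k L d0 I,
        (badv σ).card ≤ ∑ p ∈ Pall, (if OE σ p then 1 else 0) := by
      intro σ hσ
      calc (badv σ).card
          ≤ ((Pall.filter (fun p => OE σ p)).image (fun p => σ (ptn p))).card :=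
            Finset.card_le_card (hbadsub σ hσ)
        _ ≤ (Pall.filter (fun p => OE σ p)).card := Finset.card_image_le
        _ = ∑ p ∈ Pall, (if OE σ p then 1 else 0) := Finset.card_filter _ _
    have hswap : ∑ σ ∈ G k L d0 I, ∑ p ∈ Pall, (if OE σ p then 1 else 0)
        = ∑ p ∈ Pall, ((G k L d0 I).filter (fun σ => OE σ p)).card := by
      rw [Finset.sum_comm]
      refine Finset.sum_congr rfl ?_
      intro p _
      rw [Finset.card_filter]
    set Cv := C k L d0 I with hCv
    -- per-pattern bound via peeling
    have hperp : ∀ p ∈ Pall, ((G k L d0 I).filter (fun σ => OE σ p)).card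
        ≤ Cv / (3 * w) ^ (p.2.1 - 1) := by
      rintro ⟨d, h, r⟩ hp
      rw [hPall, Finset.mem_filter] at hp
      obtain ⟨hprod, hr2h, hrdlt, hposs⟩ := hp
      rw [Finset.mem_product] at hprod
      obtain ⟨hdIcc, hrest⟩ := hprod
      rw [Finset.mem_product] at hrest
      obtain ⟨hhIcc, _⟩ := hrest
      simp only at hdIcc hhIcc hr2h hrdlt hposs
      have hd1 : 1 ≤ d := (Finset.mem_Icc.mp hdIcc).1
      have hh1 : 1 ≤ h := (Finset.mem_Icc.mp hhIcc).1
      set i : ℕ := q - r * d with hidef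
      have hiq : i + r * d = q := Nat.sub_add_cancel (le_of_lt hrdlt)
      set r0 : ℕ := if r < h then r else r - h with hr0
      have hr0h : r0 < h := by rw [hr0]; split <;> omega
      set T : Finset ℕ := (range h).erase r0 with hT
      have hTmem : ∀ t, t ∈ T ↔ (t < h ∧ t ≠ r ∧ h + t ≠ r) := by
        intro t
        rw [hT, Finset.mem_erase, Finset.mem_range, hr0]
        by_cases hrh : r < h
        · rw [if_pos hrh]
          constructor
          · rintro ⟨h1, h2⟩; exact ⟨h2, h1, by omega⟩
          · rintro ⟨h1, h2, h3⟩; exact ⟨h2, h1⟩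
        · rw [if_neg hrh]
          push_neg at hrh
          constructor
          · rintro ⟨h1, h2⟩; exact ⟨h2, by omega, by omega⟩
          · rintro ⟨h1, h2, h3⟩; exact ⟨by omega, h1⟩
      have huniq : ∀ j, i + j * d = q → j = r := by
        intro j e
        exact pos_inj hd1 (by rw [e, ← hiq])
      have hsub : ((G k L d0 I).filter (fun σ => OE σ (d, h, r))) ⊆ Nset k L d0 I T i d h := by
        intro σ hσ
        obtain ⟨hσG, hσOE⟩ := Finset.mem_filter.mp hσ
        rw [mem_Nset]
        refine ⟨hσG, ?_⟩
        intro t ht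
        obtain ⟨ht1, ht2, ht3⟩ := (hTmem t).mp ht
        exact hσOE t ht1 ht2 ht3
      have hTJ : ∀ t ∈ T, i + t * d ∈ I ∧ i + (h + t) * d ∈ I := by
        intro t ht
        obtain ⟨ht1, ht2, ht3⟩ := (hTmem t).mp ht
        constructor
        · have hm := hposs t (by omega)
          rcases Finset.mem_insert.mp hm with he | hm'
          · exact absurd (huniq t he) ht2
          · exact hm'
        · have hm := hposs (h + t) (by omega)
          rcases Finset.mem_insert.mp hm with he | hm'
          · exact absurd (huniq (h + t) he) ht3
          · exact hm'
      have hTcard : T.card = h - 1 := by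
        rw [hT, Finset.card_erase_of_mem (Finset.mem_range.mpr hr0h), Finset.card_range]
      have hpeel := peel k n L d0 (3 * w) M ih (h - 1) T I hTcard hI (by omega) i d h hd1
        (fun t ht => ((hTmem t).mp ht).1) hTJ
      have hle : ((G k L d0 I).filter (fun σ => OE σ (d, h, r))).card
          ≤ (Nset k L d0 I T i d h).card := Finset.card_le_card hsub
      have hfin : (3 * w) ^ (h - 1) * ((G k L d0 I).filter (fun σ => OE σ (d, h, r))).card
          ≤ Cv := le_trans (Nat.mul_le_mul le_rfl hle) hpeel
      have hpow : 0 < (3 * w) ^ (h - 1) := pow_pos (by omega) _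
      rw [Nat.le_div_iff_mul_le hpow]
      rw [mul_comm]
      exact hfin
    -- sum over all patterns
    have hinner : ∀ h : ℕ, (∑ r ∈ range (2 * n), if r < 2 * h then Cv / (3 * w) ^ (h - 1) else 0)
        ≤ 2 * h * (Cv / (3 * w) ^ (h - 1)) := by
      intro h
      rw [← Finset.sum_filter]
      have hcard : ((range (2 * n)).filter (fun r => r < 2 * h)).card ≤ 2 * h := by
        have hss : (range (2 * n)).filter (fun r => r < 2 * h) ⊆ range (2 * h) := by
          intro r hr
          rw [Finset.mem_range]
          exact (Finset.mem_filter.mp hr).2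
        simpa using Finset.card_le_card hss
      rw [Finset.sum_const, smul_eq_mul]
      exact Nat.mul_le_mul hcard le_rfl
    have hsump : ∑ p ∈ Pall, Cv / (3 * w) ^ (p.2.1 - 1)
        ≤ k * ∑ h ∈ Icc 1 n, 2 * h * (Cv / (3 * w) ^ (h - 1)) := by
      have hsubQ : Pall ⊆ (Icc 1 k) ×ˢ ((Icc 1 n ×ˢ range (2 * n)).filter (fun z => z.2 < 2 * z.1)) := by
        intro p hp
        rw [hPall, Finset.mem_filter] at hp
        obtain ⟨hpmem, hp1, _⟩ := hp
        rw [Finset.mem_product] at hpmem ⊢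
        refine ⟨hpmem.1, ?_⟩
        rw [Finset.mem_filter]
        exact ⟨hpmem.2, hp1⟩
      calc ∑ p ∈ Pall, Cv / (3 * w) ^ (p.2.1 - 1)
          ≤ ∑ p ∈ (Icc 1 k) ×ˢ ((Icc 1 n ×ˢ range (2 * n)).filter (fun z => z.2 < 2 * z.1)),
              Cv / (3 * w) ^ (p.2.1 - 1) := Finset.sum_le_sum_of_subset hsubQ
        _ = ∑ _d ∈ Icc 1 k, ∑ z ∈ (Icc 1 n ×ˢ range (2 * n)).filter (fun z => z.2 < 2 * z.1),
              Cv / (3 * w) ^ (z.1 - 1) := by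
            rw [Finset.sum_product]
        _ = k * ∑ z ∈ (Icc 1 n ×ˢ range (2 * n)).filter (fun z => z.2 < 2 * z.1),
              Cv / (3 * w) ^ (z.1 - 1) := by
            rw [Finset.sum_const, Nat.card_Icc, smul_eq_mul]
            congr 1
        _ ≤ k * ∑ h ∈ Icc 1 n, 2 * h * (Cv / (3 * w) ^ (h - 1)) := by
            apply Nat.mul_le_mul le_rfl
            rw [Finset.sum_filter, Finset.sum_product]
            apply Finset.sum_le_sum
            intro h hh
            simp only
            exact hinner h
    have hnum := num_aux k w n Cv hw hkw
    have hbadsum : ∑ σ ∈ G k L d0 I, (badv σ).card ≤ (2 * k + 7 * w) * Cv := by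
      calc ∑ σ ∈ G k L d0 I, (badv σ).card
          ≤ ∑ σ ∈ G k L d0 I, ∑ p ∈ Pall, (if OE σ p then 1 else 0) := Finset.sum_le_sum hbadcard
        _ = ∑ p ∈ Pall, ((G k L d0 I).filter (fun σ => OE σ p)).card := hswap
        _ ≤ ∑ p ∈ Pall, Cv / (3 * w) ^ (p.2.1 - 1) := Finset.sum_le_sum hperp
        _ ≤ k * ∑ h ∈ Icc 1 n, 2 * h * (Cv / (3 * w) ^ (h - 1)) := hsump
        _ ≤ (2 * k + 7 * w) * Cv := hnum
    have hXY : (∑ σ ∈ G k L d0 I, (goodv σ).card) + (∑ σ ∈ G k L d0 I, (badv σ).card)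
        = Cv * (L q).card := by
      rw [← Finset.sum_add_distrib]
      rw [Finset.sum_congr rfl (fun σ _ => hsplit σ), Finset.sum_const, smul_eq_mul]
      rfl
    have hLq := hL q hq
    have hfin2 : 3 * w * Cv + (∑ σ ∈ G k L d0 I, (badv σ).card)
        ≤ (∑ σ ∈ G k L d0 I, (goodv σ).card) + (∑ σ ∈ G k L d0 I, (badv σ).card) := by
      calc 3 * w * Cv + (∑ σ ∈ G k L d0 I, (badv σ).card)
          ≤ 3 * w * Cv + (2 * k + 7 * w) * Cv := Nat.add_le_add_left hbadsum _
        _ = Cv * (2 * k + 10 * w) := by ring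
        _ ≤ Cv * (L q).card := Nat.mul_le_mul le_rfl hLq
        _ = _ := hXY.symm
    have hgood : 3 * w * Cv ≤ ∑ σ ∈ G k L d0 I, (goodv σ).card :=
      Nat.le_of_add_le_add_right hfin2
    exact le_trans hgood step1

lemma C_empty (k : ℕ) (L : ℕ → Finset α) (d0 : α) : C k L d0 ∅ = 1 := by
  classical
  have hG : G k L d0 ∅ = {fun _ => d0} := by
    ext σ
    rw [mem_G, Finset.mem_singleton]
    constructor
    · rintro ⟨⟨-, h2⟩, -⟩
      funext x
      exact h2 x (Finset.notMem_empty x)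
    · rintro rfl
      refine ⟨⟨fun i hi => absurd hi (Finset.notMem_empty i), fun i _ => rfl⟩, ?_⟩
      intro i d h hd1 hdk hh1 hpos
      exact absurd (hpos 0 (by omega)) (Finset.notMem_empty _)
  rw [C, hG, Finset.card_singleton]

lemma C_pos (n k w : ℕ) (L : ℕ → Finset α) (d0 : α)
    (hw : 1 ≤ w) (hkw : k ≤ w * w)
    (hL : ∀ i ∈ Icc 1 n, 2 * k + 10 * w ≤ (L i).card) :
    ∀ I : Finset ℕ, I ⊆ Icc 1 n → 0 < C k L d0 I := by
  intro I
  induction I using Finset.induction_on with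
  | empty => intro _; rw [C_empty]; omega
  | insert a s ha ih =>
    intro hsub
    have has : insert a s ⊆ Icc 1 n := hsub
    have haIcc : a ∈ Icc 1 n := has (Finset.mem_insert_self a s)
    have hssub : s ⊆ Icc 1 n := fun x hx => has (Finset.mem_insert_of_mem hx)
    have hCs := ih hssub
    have hmain := main_lemma n k w L d0 hw hkw hL (s.card + 1) s hssub (by omega) a haIcc ha
    have : 0 < 3 * w * C k L d0 s := by positivity
    omega

end NRep

theorem nonrepetitive_mod_k_from_lists' {α : Type*} (n k : ℕ) (hn : 1 ≤ n) (hk : 1 ≤ k)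
    (L : ℕ → Finset α)
    (hL : ∀ i, 1 ≤ i → i ≤ n → 2 * k + 10 * ⌈Real.sqrt k⌉₊ ≤ (L i).card) :
    ∃ s : ℕ → α, (∀ i, 1 ≤ i → i ≤ n → s i ∈ L i) ∧
      (∀ d i h, 1 ≤ d → d ≤ k → 1 ≤ i → 1 ≤ h → i + (2 * h - 1) * d ≤ n →
        ¬ ∀ t < h, s (i + t * d) = s (i + (h + t) * d)) := by
  classical
  set w := ⌈Real.sqrt k⌉₊ with hwdef
  have hw : 1 ≤ w := by
    rw [hwdef]
    rw [Nat.one_le_ceil_iff]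
    have : (1:ℝ) ≤ (k:ℝ) := by exact_mod_cast hk
    positivity
  have hkw : k ≤ w * w := by
    have h1 : Real.sqrt k ≤ (w:ℝ) := Nat.le_ceil _
    have h2 : (0:ℝ) ≤ (k:ℝ) := by positivity
    have h3 : Real.sqrt k * Real.sqrt k = (k:ℝ) := Real.mul_self_sqrt h2
    have h4 : (k:ℝ) ≤ (w:ℝ) * w := by nlinarith [Real.sqrt_nonneg (k:ℝ)]
    exact_mod_cast h4
  have hL' : ∀ i ∈ Finset.Icc 1 n, 2 * k + 10 * w ≤ (L i).card := by
    intro i hi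
    obtain ⟨h1, h2⟩ := Finset.mem_Icc.mp hi
    exact hL i h1 h2
  have hL1 : (L 1).Nonempty := by
    rw [← Finset.card_pos]
    have := hL 1 le_rfl hn
    omega
  obtain ⟨d0, -⟩ := hL1
  have hpos := NRep.C_pos n k w L d0 hw hkw hL' (Finset.Icc 1 n) le_rfl
  rw [NRep.C, Finset.card_pos] at hpos
  obtain ⟨σ, hσ⟩ := hpos
  obtain ⟨⟨hmem, -⟩, hGood⟩ := NRep.mem_G.mp hσ
  refine ⟨σ, ?_, ?_⟩
  · intro i h1 h2
    exact hmem i (Finset.mem_Icc.mpr ⟨h1, h2⟩)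
  · intro d i h hd1 hdk hi1 hh1 hlast hall
    have hposs : ∀ j < 2 * h, i + j * d ∈ Finset.Icc 1 n := by
      intro j hj
      rw [Finset.mem_Icc]
      have hjd : j * d ≤ (2 * h - 1) * d := Nat.mul_le_mul_right d (by omega)
      constructor
      · omega
      · omega
    exact hGood i d h hd1 hdk hh1 hposs hall


/-- Theorem 1: for all `n, k ≥ 1` and lists `L_1, ..., L_n` each of size at
least `2k + 10⌈√k⌉`, there is a sequence `S` with `s_i ∈ L_i` which is
nonrepetitive up to mod `k`. -/
theorem nonrepetitive_mod_k_from_lists {α : Type*} (n k : ℕ) (hn : 1 ≤ n) (hk : 1 ≤ k)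
    (L : ℕ → Finset α)
    (hL : ∀ i, 1 ≤ i → i ≤ n → 2 * k + 10 * ⌈Real.sqrt k⌉₊ ≤ (L i).card) :
    ∃ s : ℕ → α, (∀ i, 1 ≤ i → i ≤ n → s i ∈ L i) ∧ NonrepetitiveUpToMod k s n := by
  obtain ⟨s, h1, h2⟩ := nonrepetitive_mod_k_from_lists' n k hn hk L hL
  exact ⟨s, h1, h2⟩
end

section
/- For every k ≥ 1, M(k) ≤ 2k + 10⌈√k⌉: there exist arbitrarily long sequences over an alphabet of size 2k + 10⌈√k⌉ whose arithmetic subsequences with common differences in {1, ..., k} are all nonrepetitive. -/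
namespace NonrepAux

open Finset

variable {α : Type*}

def Valid (k : ℕ) (S : Finset ℕ) (f : ℕ → α) : Prop :=
  ∀ d i h : ℕ, 1 ≤ d → d ≤ k → 1 ≤ h → (∀ t < 2 * h, i + t * d ∈ S) →
    ¬ ∀ t < h, f (i + t * d) = f (i + (h + t) * d)

def Good (k : ℕ) (z : α) (S : Finset ℕ) : Set (ℕ → α) :=
  {f | (∀ i, i ∉ S → f i = z) ∧ Valid k S f}

lemma good_finite [Fintype α] (k : ℕ) (z : α) (S : Finset ℕ) : (Good k z S).Finite := by
  classical
  have h : Set.InjOn (fun f : ℕ → α => (fun i : S => f i)) (Good k z S) := by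
    intro f hf g hg hfg
    funext i
    by_cases hi : i ∈ S
    · exact congrFun hfg ⟨i, hi⟩
    · rw [hf.1 i hi, hg.1 i hi]
  exact Set.Finite.of_finite_image (Set.toFinite _) h

noncomputable def W [Fintype α] (k : ℕ) (z : α) (S : Finset ℕ) : ℕ :=
  Nat.card (Good k z S)

/-! Triples `x = (d, h, i)`. -/

/-- first half positions -/
def FH (x : ℕ × ℕ × ℕ) : Finset ℕ := (range x.2.1).image fun t => x.2.2 + t * x.1

/-- second half positions -/
def SH (x : ℕ × ℕ × ℕ) : Finset ℕ := (range x.2.1).image fun t => x.2.2 + (x.2.1 + t) * x.1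

open scoped Classical in
/-- the deleted half: the one containing `u` (when `u` is among the positions) -/
noncomputable def DD (u : ℕ) (x : ℕ × ℕ × ℕ) : Finset ℕ := if u ∈ FH x then FH x else SH x

open scoped Classical in
noncomputable def Idx (k n u : ℕ) (S : Finset ℕ) : Finset (ℕ × ℕ × ℕ) :=
  ((Icc 1 k) ×ˢ (Icc 1 n) ×ˢ (Icc 1 n)).filter fun x =>
    (∀ t < 2 * x.2.1, x.2.2 + t * x.1 ∈ S) ∧ ∃ t < 2 * x.2.1, x.2.2 + t * x.1 = u

def ViolEq (x : ℕ × ℕ × ℕ) (f : ℕ → α) : Prop :=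
  ∀ t < x.2.1, f (x.2.2 + t * x.1) = f (x.2.2 + (x.2.1 + t) * x.1)

lemma mem_Idx {k n u : ℕ} {S : Finset ℕ} {x : ℕ × ℕ × ℕ} (hx : x ∈ Idx k n u S) :
    1 ≤ x.1 ∧ x.1 ≤ k ∧ 1 ≤ x.2.1 ∧ x.2.1 ≤ n ∧ 1 ≤ x.2.2 ∧ x.2.2 ≤ n ∧
      (∀ t < 2 * x.2.1, x.2.2 + t * x.1 ∈ S) ∧ ∃ t < 2 * x.2.1, x.2.2 + t * x.1 = u := by
  classical
  rw [Idx, mem_filter, mem_product, mem_product] at hx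
  obtain ⟨⟨hd, hh, hi⟩, hP, hE⟩ := hx
  rw [mem_Icc] at hd hh hi
  exact ⟨hd.1, hd.2, hh.1, hh.2, hi.1, hi.2, hP, hE⟩

lemma DD_subset {k n u : ℕ} {S : Finset ℕ} {x : ℕ × ℕ × ℕ} (hx : x ∈ Idx k n u S) :
    DD u x ⊆ S := by
  classical
  obtain ⟨-, -, hh1, -, -, -, hP, -⟩ := mem_Idx hx
  have hFH : FH x ⊆ S := by
    intro p hp
    rw [FH, mem_image] at hp
    obtain ⟨t, ht, rfl⟩ := hp
    exact hP t (by rw [mem_range] at ht; omega)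
  have hSH : SH x ⊆ S := by
    intro p hp
    rw [SH, mem_image] at hp
    obtain ⟨t, ht, rfl⟩ := hp
    exact hP (x.2.1 + t) (by rw [mem_range] at ht; omega)
  rw [DD]
  split <;> assumption

lemma mem_DD_self {k n u : ℕ} {S : Finset ℕ} {x : ℕ × ℕ × ℕ} (hx : x ∈ Idx k n u S) :
    u ∈ DD u x := by
  classical
  obtain ⟨-, -, hh1, -, -, -, -, t, ht, hteq⟩ := mem_Idx hx
  rw [DD]
  split_ifs with hcase
  · exact hcase
  · rw [SH, mem_image]
    refine ⟨t - x.2.1, ?_, ?_⟩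
    · rw [mem_range]
      by_contra hc
      -- then t < x.2.1, so u ∈ FH x, contradiction
      push_neg at hc
      have ht' : t < x.2.1 := by omega
      exact absurd (by rw [FH, mem_image]; exact ⟨t, mem_range.mpr ht', hteq⟩) hcase
    · have ht' : ¬ t < x.2.1 := by
        intro hlt
        exact hcase (by rw [FH, mem_image]; exact ⟨t, mem_range.mpr hlt, hteq⟩)
      rw [show x.2.1 + (t - x.2.1) = t by omega]
      exact hteq

lemma card_DD {u : ℕ} {x : ℕ × ℕ × ℕ} (hd : 1 ≤ x.1) : (DD u x).card = x.2.1 := by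
  classical
  have hinj : ∀ c : ℕ, Function.Injective fun t : ℕ => x.2.2 + (c + t) * x.1 := by
    intro c a b hab
    simp only [] at hab
    have := Nat.add_left_cancel hab
    have : (c + a) * x.1 = (c + b) * x.1 := this
    have := Nat.eq_of_mul_eq_mul_right (by omega : 0 < x.1) this
    omega
  rw [DD]
  split
  · rw [FH, card_image_of_injective _ (by simpa using hinj 0), card_range]
  · rw [SH, card_image_of_injective _ (hinj x.2.1), card_range]


def mask (z : α) (D : Finset ℕ) (f : ℕ → α) : ℕ → α := fun p => if p ∈ D then z else f p

open scoped Classical in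
noncomputable def recon (z : α) (u : ℕ) (x : ℕ × ℕ × ℕ) (f' : ℕ → α) : ℕ → α := fun p =>
  if p ∈ DD u x then (if u ∈ FH x then f' (p + x.2.1 * x.1) else f' (p - x.2.1 * x.1))
  else f' p

/-- L1 : a valid extension is good -/
lemma upd_mem_good [DecidableEq ℕ] {k : ℕ} {z : α} {S : Finset ℕ} {u : ℕ} (hu : u ∈ S)
    {g : ℕ → α} (hg : g ∈ Good k z (S.erase u)) (a : α)
    (hf : Valid k S (Function.update g u a)) : Function.update g u a ∈ Good k z S := by
  refine ⟨fun i hi => ?_, hf⟩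
  have hne : i ≠ u := fun h => hi (h ▸ hu)
  rw [Function.update_of_ne hne]
  exact hg.1 i (by simp [Finset.mem_erase, hne, hi])

/-- L2 : a bad extension yields a violated triple through `u` -/
lemma exists_triple {k n : ℕ} {z : α} {S : Finset ℕ} (hS : S ⊆ Icc 1 n) {u : ℕ}
    (hu : u ∈ S) {g : ℕ → α} (hg : g ∈ Good k z (S.erase u)) (a : α)
    (hbad : ¬ Valid k S (Function.update g u a)) :
    ∃ x : ℕ × ℕ × ℕ, x ∈ Idx k n u S ∧ ViolEq x (Function.update g u a) := by
  classical
  rw [Valid] at hbad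
  push_neg at hbad
  obtain ⟨d, i, h, hd1, hdk, hh1, hpos, heq⟩ := hbad
  set f := Function.update g u a with hfdef
  have hhit : ∃ t < 2 * h, i + t * d = u := by
    by_contra hc
    push_neg at hc
    -- all positions avoid u, so g violates validity on S.erase u
    have hposT : ∀ t < 2 * h, i + t * d ∈ S.erase u := by
      intro t ht
      exact Finset.mem_erase.mpr ⟨hc t ht, hpos t ht⟩
    refine hg.2 d i h hd1 hdk hh1 hposT (fun t ht => ?_)
    have h1 : i + t * d ≠ u := hc t (by omega)
    have h2 : i + (h + t) * d ≠ u := hc (h + t) (by omega)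
    have := heq t ht
    rwa [hfdef, Function.update_of_ne h1, Function.update_of_ne h2] at this
  refine ⟨(d, h, i), ?_, heq⟩
  have hiS : i ∈ S := by simpa using hpos 0 (by omega)
  have hi1 : 1 ≤ i := (Finset.mem_Icc.mp (hS hiS)).1
  have hin : i ≤ n := (Finset.mem_Icc.mp (hS hiS)).2
  have hlast : i + (2 * h - 1) * d ∈ S := hpos (2 * h - 1) (by omega)
  have hlastn : i + (2 * h - 1) * d ≤ n := (Finset.mem_Icc.mp (hS hlast)).2
  have hhn : h ≤ n :=
    le_trans (le_trans (by omega : h ≤ (2 * h - 1) * 1) (Nat.mul_le_mul_left _ hd1))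
      (le_trans (Nat.le_add_left _ _) hlastn)
  rw [Idx, mem_filter, mem_product, mem_product]
  exact ⟨⟨mem_Icc.mpr ⟨hd1, hdk⟩, mem_Icc.mpr ⟨hh1, hhn⟩, mem_Icc.mpr ⟨hi1, hin⟩⟩, hpos, hhit⟩

/-- L3 : the masked function is good on `S \ DD u x` -/
lemma mask_mem_good {k n : ℕ} {z : α} {S : Finset ℕ} {u : ℕ} (hu : u ∈ S)
    {g : ℕ → α} (hg : g ∈ Good k z (S.erase u)) (a : α)
    {x : ℕ × ℕ × ℕ} (hx : x ∈ Idx k n u S) :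
    mask z (DD u x) (Function.update g u a) ∈ Good k z (S \ DD u x) := by
  classical
  set f := Function.update g u a with hfdef
  have huD : u ∈ DD u x := mem_DD_self hx
  have hagree : ∀ p, p ∈ S \ DD u x → mask z (DD u x) f p = g p := by
    intro p hp
    rw [Finset.mem_sdiff] at hp
    have hpne : p ≠ u := fun h => hp.2 (h ▸ huD)
    rw [mask]
    simp only [if_neg hp.2]
    rw [hfdef, Function.update_of_ne hpne]
  constructor
  · intro p hp
    rw [Finset.mem_sdiff] at hp
    push_neg at hp
    by_cases hpD : p ∈ DD u x
    · rw [mask]; simp [hpD]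
    · have hpS : p ∉ S := fun h => hpD (hp h)
      have hpne : p ≠ u := fun h => hpS (h ▸ hu)
      rw [mask]
      simp only [if_neg hpD]
      rw [hfdef, Function.update_of_ne hpne]
      exact hg.1 p (by simp [Finset.mem_erase, hpne, hpS])
  · intro d i h hd1 hdk hh1 hpos heq
    have hposT : ∀ t < 2 * h, i + t * d ∈ S.erase u := by
      intro t ht
      have := hpos t ht
      rw [Finset.mem_sdiff] at this
      exact Finset.mem_erase.mpr ⟨fun hc => this.2 (hc ▸ huD), this.1⟩
    refine hg.2 d i h hd1 hdk hh1 hposT (fun t ht => ?_)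
    have e1 := hagree _ (hpos t (by omega))
    have e2 := hagree _ (hpos (h + t) (by omega))
    calc g (i + t * d) = mask z (DD u x) f (i + t * d) := e1.symm
      _ = mask z (DD u x) f (i + (h + t) * d) := heq t ht
      _ = g (i + (h + t) * d) := e2

/-- L4 : reconstruction -/
lemma recon_eq {k n : ℕ} {z : α} {S : Finset ℕ} {u : ℕ}
    {x : ℕ × ℕ × ℕ} (hx : x ∈ Idx k n u S) {f : ℕ → α} (hviol : ViolEq x f) :
    ∀ p, f p = recon z u x (mask z (DD u x) f) p := by
  classical
  obtain ⟨hd1, -, hh1, -⟩ := mem_Idx hx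
  intro p
  rw [recon]
  by_cases hp : p ∈ DD u x
  · rw [if_pos hp]
    rw [DD] at hp
    by_cases hcase : u ∈ FH x
    · rw [if_pos hcase]
      rw [if_pos hcase] at hp
      rw [FH, mem_image] at hp
      obtain ⟨t, ht, rfl⟩ := hp
      rw [mem_range] at ht
      have hkey : x.2.2 + t * x.1 + x.2.1 * x.1 = x.2.2 + (x.2.1 + t) * x.1 := by ring
      have hnot : x.2.2 + (x.2.1 + t) * x.1 ∉ DD u x := by
        rw [DD, if_pos hcase, FH, mem_image]
        rintro ⟨t', ht', he⟩
        rw [mem_range] at ht'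
        have h1 : t' * x.1 = (x.2.1 + t) * x.1 := Nat.add_left_cancel he
        have h2 : t' = x.2.1 + t := Nat.eq_of_mul_eq_mul_right (by omega) h1
        omega
      rw [hkey, mask]
      simp only [if_neg hnot]
      exact hviol t ht
    · rw [if_neg hcase]
      rw [if_neg hcase] at hp
      rw [SH, mem_image] at hp
      obtain ⟨t, ht, rfl⟩ := hp
      rw [mem_range] at ht
      have hkey : x.2.2 + (x.2.1 + t) * x.1 - x.2.1 * x.1 = x.2.2 + t * x.1 := by
        have : (x.2.1 + t) * x.1 = t * x.1 + x.2.1 * x.1 := by ring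
        omega
      have hnot : x.2.2 + t * x.1 ∉ DD u x := by
        rw [DD, if_neg hcase, SH, mem_image]
        rintro ⟨t', ht', he⟩
        rw [mem_range] at ht'
        have h1 : (x.2.1 + t') * x.1 = t * x.1 := Nat.add_left_cancel he
        have h2 : x.2.1 + t' = t := Nat.eq_of_mul_eq_mul_right (by omega) h1
        omega
      rw [hkey, mask]
      simp only [if_neg hnot]
      exact (hviol t ht).symm
  · rw [if_neg hp, mask]
    simp only [if_neg hp]


lemma count_ineq [Fintype α] (k n : ℕ) (z : α) (S : Finset ℕ) (hS : S ⊆ Icc 1 n)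
    (u : ℕ) (hu : u ∈ S) :
    Fintype.card α * W k z (S.erase u) ≤
      W k z S + ∑ x ∈ Idx k n u S, W k z (S \ DD u x) := by
  classical
  set T := S.erase u with hT
  haveI : ∀ R : Finset ℕ, Finite (Good k z R) := fun R => (good_finite k z R).to_subtype
  haveI : ∀ x : {x // x ∈ Idx k n u S}, Finite ↥(Good k z (S \ DD u x.1)) :=
    fun x => (good_finite k z _).to_subtype
  -- the injection
  let up : ↥(Good k z T) × α → (ℕ → α) := fun p =>
    Function.update (p.1 : ℕ → α) u p.2
  have up_inj : Function.Injective up := by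
    intro p q hpq
    have ha : p.2 = q.2 := by
      have := congrFun hpq u
      simpa [up, Function.update_self] using this
    have hg : (p.1 : ℕ → α) = (q.1 : ℕ → α) := by
      funext i
      by_cases hi : i = u
      · subst hi
        rw [(p.1.2).1 i (by simp [hT]), (q.1.2).1 i (by simp [hT])]
      · have := congrFun hpq i
        simpa [up, Function.update_of_ne hi] using this
    exact Prod.ext (Subtype.ext hg) ha
  let Φ : ↥(Good k z T) × α →
      ↥(Good k z S) ⊕ (Σ x : {x // x ∈ Idx k n u S}, ↥(Good k z (S \ DD u x.1))) := fun p =>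
    if hf : Valid k S (up p) then
      Sum.inl ⟨up p, upd_mem_good hu p.1.2 p.2 hf⟩
    else
      let ex := exists_triple hS hu p.1.2 p.2 hf
      Sum.inr ⟨⟨ex.choose, ex.choose_spec.1⟩,
        ⟨mask z (DD u ex.choose) (up p), mask_mem_good hu p.1.2 p.2 ex.choose_spec.1⟩⟩
  have Φinj : Function.Injective Φ := by
    intro p q hpq
    by_cases hp : Valid k S (up p) <;> by_cases hq : Valid k S (up q)
    · simp only [Φ, dif_pos hp, dif_pos hq, Sum.inl.injEq, Subtype.mk.injEq] at hpq
      exact up_inj hpq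
    · simp only [Φ, dif_pos hp, dif_neg hq] at hpq
      exact absurd hpq (by simp)
    · simp only [Φ, dif_neg hp, dif_pos hq] at hpq
      exact absurd hpq (by simp)
    · simp only [Φ, dif_neg hp, dif_neg hq, Sum.inr.injEq] at hpq
      set ep := exists_triple hS hu p.1.2 p.2 hp with hep
      set eq' := exists_triple hS hu q.1.2 q.2 hq with heq'
      have hx : ep.choose = eq'.choose := by
        have := congrArg (fun s : (Σ x : {x // x ∈ Idx k n u S},
            ↥(Good k z (S \ DD u x.1))) => (s.1 : ℕ × ℕ × ℕ)) hpq
        simpa using this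
      have hm : mask z (DD u ep.choose) (up p) = mask z (DD u eq'.choose) (up q) := by
        have := congrArg (fun s : (Σ x : {x // x ∈ Idx k n u S},
            ↥(Good k z (S \ DD u x.1))) => (s.2 : ℕ → α)) hpq
        simpa using this
      have hm' : mask z (DD u ep.choose) (Function.update (p.1 : ℕ → α) u p.2) =
          mask z (DD u eq'.choose) (Function.update (q.1 : ℕ → α) u q.2) := hm
      have h1 : up p = up q := by
        funext pp
        show Function.update (p.1 : ℕ → α) u p.2 pp = Function.update (q.1 : ℕ → α) u q.2 pp
        rw [hx] at hm'
        rw [recon_eq (z := z) ep.choose_spec.1 ep.choose_spec.2 pp,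
          recon_eq (z := z) eq'.choose_spec.1 eq'.choose_spec.2 pp, hx, hm']
      exact up_inj h1
  have hcard := Nat.card_le_card_of_injective Φ Φinj
  have hL : Nat.card (↥(Good k z T) × α) = Fintype.card α * W k z T := by
    rw [Nat.card_prod, mul_comm]
    congr 1
    exact Nat.card_eq_fintype_card
  have hR : Nat.card (↥(Good k z S) ⊕
      (Σ x : {x // x ∈ Idx k n u S}, ↥(Good k z (S \ DD u x.1)))) =
      W k z S + ∑ x ∈ Idx k n u S, W k z (S \ DD u x) := by
    rw [Nat.card_sum]
    congr 1
    haveI FT : ∀ x : {x // x ∈ Idx k n u S}, Fintype ↥(Good k z (S \ DD u x.1)) :=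
      fun x => (good_finite k z _).fintype
    rw [Nat.card_eq_fintype_card, Fintype.card_sigma]
    have hWx : ∀ x : {x // x ∈ Idx k n u S},
        Fintype.card ↥(Good k z (S \ DD u x.1)) = W k z (S \ DD u x.1) := by
      intro x
      rw [W, Nat.card_eq_fintype_card]
    rw [Finset.sum_congr rfl (fun x _ => hWx x)]
    exact Finset.sum_coe_sort (Idx k n u S) (fun x => W k z (S \ DD u x))
  rw [hL, hR] at hcard
  exact hcard


lemma chain [Fintype α] (k n : ℕ) (z : α) (β : ℝ) (hβ : 0 ≤ β) (M : ℕ)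
    (H : ∀ V : Finset ℕ, V ⊆ Icc 1 n → V.card ≤ M → ∀ u ∈ V,
      β * (W k z (V.erase u) : ℝ) ≤ (W k z V : ℝ)) :
    ∀ (U V : Finset ℕ), U ⊆ V → V ⊆ Icc 1 n → V.card ≤ M →
      β ^ U.card * (W k z (V \ U) : ℝ) ≤ (W k z V : ℝ) := by
  classical
  intro U
  induction U using Finset.induction_on with
  | empty =>
    intro V hUV hIcc hcard
    simp
  | @insert x U' hx ih =>
    intro V hUV hIcc hcard
    have hxV : x ∈ V := hUV (mem_insert_self _ _)
    have hU'V' : U' ⊆ V.erase x := by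
      intro y hy
      exact mem_erase.mpr ⟨fun h => hx (h ▸ hy), hUV (mem_insert_of_mem hy)⟩
    have h1 := H V hIcc hcard x hxV
    have h2 := ih (V.erase x) hU'V' (le_trans (erase_subset _ _) hIcc)
      (le_trans (card_erase_le) hcard)
    have hset : V.erase x \ U' = V \ insert x U' := by
      ext p
      simp only [mem_sdiff, mem_erase, mem_insert]
      tauto
    calc β ^ (insert x U').card * (W k z (V \ insert x U') : ℝ)
        = β * (β ^ U'.card * (W k z (V.erase x \ U') : ℝ)) := by
          rw [card_insert_of_notMem hx, hset, pow_succ]; ring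
      _ ≤ β * (W k z (V.erase x) : ℝ) := by
          apply mul_le_mul_of_nonneg_left h2 hβ
      _ ≤ (W k z V : ℝ) := h1

lemma sum_bound (k n u : ℕ) (S : Finset ℕ) {β : ℝ} (hβ : 1 < β) :
    ∑ x ∈ Idx k n u S, (β⁻¹) ^ (x.2.1 - 1) ≤ 2 * k * (β / (β - 1)) ^ 2 := by
  classical
  set q : ℝ := β⁻¹ with hq
  have hq0 : 0 ≤ q := by positivity
  have hq1 : q < 1 := by
    rw [hq, inv_lt_one_iff₀]; right; exact hβ
  have hq1' : 0 < 1 - q := by linarith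
  -- innermost bound
  have inner : ∀ d h : ℕ,
      (∑ i ∈ Icc 1 n, if (∃ t < 2 * h, i + t * d = u) then q ^ (h - 1) else 0)
        ≤ (2 * h : ℝ) * q ^ (h - 1) := by
    intro d h
    rw [← Finset.sum_filter, Finset.sum_const]
    have hsub : (Icc 1 n).filter (fun i => ∃ t < 2 * h, i + t * d = u) ⊆
        (range (2 * h)).image (fun t => u - t * d) := by
      intro i hi
      rw [mem_filter] at hi
      obtain ⟨-, t, ht, hteq⟩ := hi
      exact mem_image.mpr ⟨t, mem_range.mpr ht, by omega⟩
    have hcard : ((Icc 1 n).filter (fun i => ∃ t < 2 * h, i + t * d = u)).card ≤ 2 * h :=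
      le_trans (card_le_card hsub) (le_trans card_image_le (by rw [card_range]))
    rw [nsmul_eq_mul]
    apply mul_le_mul_of_nonneg_right _ (by positivity)
    exact_mod_cast hcard
  -- geometric series bound
  have geo : (∑ h ∈ Icc 1 n, (h : ℝ) * q ^ (h - 1)) ≤ (1 / (1 - q)) ^ 2 := by
    have hnorm : ‖q‖ < 1 := by rw [Real.norm_eq_abs, abs_of_nonneg hq0]; exact hq1
    have hs : HasSum (fun j : ℕ => ((j + 1 : ℕ) : ℝ) * q ^ j) (1 / (1 - q) ^ 2) := by
      have h0 := hasSum_choose_mul_geometric_of_norm_lt_one (𝕜 := ℝ) 1 hnorm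
      simp only [Nat.choose_one_right, pow_one] at h0
      exact_mod_cast h0
    have hinj : Set.InjOn (· - 1) ↑(Icc 1 n) := by
      intro a ha b hb hab
      simp only [mem_coe, mem_Icc] at ha hb
      simp only [] at hab
      omega
    have e1 : (∑ h ∈ Icc 1 n, (h : ℝ) * q ^ (h - 1)) =
        ∑ j ∈ (Icc 1 n).image (· - 1), ((j + 1 : ℕ) : ℝ) * q ^ j := by
      rw [Finset.sum_image (fun a ha b hb => hinj (by exact_mod_cast ha) (by exact_mod_cast hb))]
      apply Finset.sum_congr rfl
      intro h hh
      rw [mem_Icc] at hh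
      have : h - 1 + 1 = h := by omega
      rw [this]
    rw [e1]
    have := sum_le_hasSum ((Icc 1 n).image (· - 1))
      (fun j _ => by positivity) hs
    calc ∑ j ∈ (Icc 1 n).image (· - 1), ((j + 1 : ℕ) : ℝ) * q ^ j
        ≤ 1 / (1 - q) ^ 2 := this
      _ = (1 / (1 - q)) ^ 2 := by rw [div_pow, one_pow]
  -- assembling
  have hIdxsub : Idx k n u S ⊆
      ((Icc 1 k) ×ˢ (Icc 1 n) ×ˢ (Icc 1 n)).filter
        (fun x => ∃ t < 2 * x.2.1, x.2.2 + t * x.1 = u) := by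
    intro x hx
    rw [Idx, mem_filter] at hx
    rw [mem_filter]
    exact ⟨hx.1, hx.2.2⟩
  calc ∑ x ∈ Idx k n u S, q ^ (x.2.1 - 1)
      ≤ ∑ x ∈ ((Icc 1 k) ×ˢ (Icc 1 n) ×ˢ (Icc 1 n)).filter
          (fun x => ∃ t < 2 * x.2.1, x.2.2 + t * x.1 = u), q ^ (x.2.1 - 1) := by
        apply Finset.sum_le_sum_of_subset_of_nonneg hIdxsub
        intro x _ _
        positivity
    _ = ∑ d ∈ Icc 1 k, ∑ y ∈ (Icc 1 n) ×ˢ (Icc 1 n),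
          if (∃ t < 2 * y.1, y.2 + t * d = u) then q ^ (y.1 - 1) else 0 := by
        rw [Finset.sum_filter, Finset.sum_product]
    _ = ∑ d ∈ Icc 1 k, ∑ h ∈ Icc 1 n, ∑ i ∈ Icc 1 n,
          if (∃ t < 2 * h, i + t * d = u) then q ^ (h - 1) else 0 := by
        apply Finset.sum_congr rfl
        intro d _
        rw [Finset.sum_product]
    _ ≤ ∑ d ∈ Icc 1 k, ∑ h ∈ Icc 1 n, (2 * h : ℝ) * q ^ (h - 1) := by
        apply Finset.sum_le_sum
        intro d _
        apply Finset.sum_le_sum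
        intro h _
        exact inner d h
    _ ≤ ∑ d ∈ Icc 1 k, 2 * (1 / (1 - q)) ^ 2 := by
        apply Finset.sum_le_sum
        intro d _
        have : ∑ h ∈ Icc 1 n, (2 * h : ℝ) * q ^ (h - 1)
            = 2 * ∑ h ∈ Icc 1 n, (h : ℝ) * q ^ (h - 1) := by
          rw [Finset.mul_sum]
          apply Finset.sum_congr rfl
          intro h _
          ring
        rw [this]
        linarith [geo]
    _ = (k : ℝ) * (2 * (1 / (1 - q)) ^ 2) := by
        rw [Finset.sum_const, Nat.card_Icc, nsmul_eq_mul]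
        norm_num
    _ = 2 * k * (β / (β - 1)) ^ 2 := by
        have hβ0 : β ≠ 0 := by linarith
        have hβ1 : β - 1 ≠ 0 := sub_ne_zero.mpr (by linarith)
        have : 1 - q = (β - 1) / β := by
          rw [hq]; field_simp
        rw [this]
        field_simp


lemma W_empty [Fintype α] (k : ℕ) (z : α) : W k z (∅ : Finset ℕ) = 1 := by
  have hset : Good k z (∅ : Finset ℕ) = {fun _ => z} := by
    ext f
    constructor
    · intro hf
      have : f = fun _ => z := funext fun i => hf.1 i (notMem_empty i)
      simpa [Set.mem_singleton_iff] using this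
    · intro hf
      rw [Set.mem_singleton_iff] at hf
      subst hf
      refine ⟨fun i _ => rfl, ?_⟩
      intro d i h hd1 hdk hh1 hpos _
      exact absurd (hpos 0 (by omega)) (notMem_empty _)
  rw [W, hset]
  exact Nat.card_unique

lemma key [Fintype α] (k n : ℕ) (z : α) (β : ℝ) (hβ : 1 < β)
    (hA : β + 2 * k * (β / (β - 1)) ^ 2 ≤ (Fintype.card α : ℝ)) :
    ∀ m : ℕ, ∀ S : Finset ℕ, S ⊆ Icc 1 n → S.card ≤ m → ∀ u ∈ S,
      β * (W k z (S.erase u) : ℝ) ≤ (W k z S : ℝ) := by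
  intro m
  induction m using Nat.strong_induction_on with
  | _ m IH =>
    intro S hS hcard u hu
    have hm1 : 1 ≤ m := le_trans (card_pos.mpr ⟨u, hu⟩) hcard
    set T := S.erase u with hT
    have H : ∀ V : Finset ℕ, V ⊆ Icc 1 n → V.card ≤ m - 1 → ∀ u' ∈ V,
        β * (W k z (V.erase u') : ℝ) ≤ (W k z V : ℝ) :=
      fun V hV hVc u' hu' => IH (m - 1) (by omega) V hV hVc u' hu'
    have hchain := chain k n z β (by linarith) (m - 1) H
    have hTIcc : T ⊆ Icc 1 n := le_trans (erase_subset _ _) hS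
    have hTc : T.card ≤ m - 1 := by
      rw [hT, card_erase_of_mem hu]
      omega
    have per : ∀ x ∈ Idx k n u S,
        (W k z (S \ DD u x) : ℝ) ≤ β⁻¹ ^ (x.2.1 - 1) * (W k z T : ℝ) := by
      intro x hx
      have hd1 := (mem_Idx hx).1
      have hDsub : DD u x ⊆ S := DD_subset hx
      have huD : u ∈ DD u x := mem_DD_self hx
      have hUsub : (DD u x).erase u ⊆ T := by
        intro y hy
        rw [mem_erase] at hy
        rw [hT, mem_erase]
        exact ⟨hy.1, hDsub hy.2⟩
      have hc := hchain ((DD u x).erase u) T hUsub hTIcc hTc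
      have hsets : T \ ((DD u x).erase u) = S \ DD u x := by
        ext p
        simp only [hT, mem_sdiff, mem_erase]
        constructor
        · rintro ⟨⟨hp1, hp2⟩, hp3⟩
          exact ⟨hp2, fun hc' => hp3 ⟨hp1, hc'⟩⟩
        · rintro ⟨hp1, hp2⟩
          exact ⟨⟨fun he => hp2 (he ▸ huD), hp1⟩, fun hc' => hp2 hc'.2⟩
      have hcards : ((DD u x).erase u).card = x.2.1 - 1 := by
        rw [card_erase_of_mem huD, card_DD hd1]
      rw [hsets, hcards] at hc
      have hpow : (0 : ℝ) < β ^ (x.2.1 - 1) := by positivity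
      calc (W k z (S \ DD u x) : ℝ)
          = β ^ (x.2.1 - 1) * (W k z (S \ DD u x) : ℝ) / β ^ (x.2.1 - 1) := by
            field_simp
        _ ≤ (W k z T : ℝ) / β ^ (x.2.1 - 1) := by
            gcongr
        _ = β⁻¹ ^ (x.2.1 - 1) * (W k z T : ℝ) := by
            rw [inv_pow]
            field_simp
    have hcnt := count_ineq k n z S hS u hu
    have hcntR : (Fintype.card α : ℝ) * (W k z T : ℝ) ≤
        (W k z S : ℝ) + ∑ x ∈ Idx k n u S, (W k z (S \ DD u x) : ℝ) := by
      exact_mod_cast hcnt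
    have hsum : ∑ x ∈ Idx k n u S, (W k z (S \ DD u x) : ℝ) ≤
        (∑ x ∈ Idx k n u S, β⁻¹ ^ (x.2.1 - 1)) * (W k z T : ℝ) := by
      rw [Finset.sum_mul]
      exact Finset.sum_le_sum per
    have hsb := sum_bound k n u S hβ
    have hWT : (0 : ℝ) ≤ (W k z T : ℝ) := Nat.cast_nonneg _
    have h3 : (((Fintype.card α : ℝ) - β) - ∑ x ∈ Idx k n u S, β⁻¹ ^ (x.2.1 - 1)) *
        (W k z T : ℝ) ≥ 0 := mul_nonneg (by linarith) hWT
    nlinarith [hcntR, hsum, h3]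

lemma exists_good [Fintype α] (k n : ℕ) (z : α) (β : ℝ) (hβ : 1 < β)
    (hA : β + 2 * k * (β / (β - 1)) ^ 2 ≤ (Fintype.card α : ℝ)) :
    ∃ f : ℕ → α, Valid k (Icc 1 n) f := by
  have hkey := key k n z β hβ hA
  have H : ∀ V : Finset ℕ, V ⊆ Icc 1 n → V.card ≤ n → ∀ u ∈ V,
      β * (W k z (V.erase u) : ℝ) ≤ (W k z V : ℝ) :=
    fun V hV hVc u hu => hkey n V hV hVc u hu
  have hchain := chain k n z β (by linarith) n H
  have h0 := hchain (Icc 1 n) (Icc 1 n) (Finset.Subset.refl _) (Finset.Subset.refl _)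
    (by rw [Nat.card_Icc]; omega)
  have hbot : (Icc 1 n : Finset ℕ) \ Icc 1 n = ∅ := Finset.sdiff_self _
  rw [hbot, W_empty] at h0
  have hβn : (0 : ℝ) < β ^ (Icc 1 n).card := by positivity
  have hpos : 0 < W k z (Icc 1 n) := by
    have h1 : (0 : ℝ) < (W k z (Icc 1 n) : ℝ) := lt_of_lt_of_le hβn (by simpa using h0)
    exact_mod_cast h1
  rw [W] at hpos
  obtain ⟨⟨f, hf⟩, -⟩ := Nat.card_pos_iff.mp hpos
  exact ⟨f, hf.2⟩

end NonrepAux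

/-- `M(k) ≤ 2k + 10⌈√k⌉`: for every `k ≥ 1` and every `n` there is a sequence
of length `n` over an alphabet of size `2k + 10⌈√k⌉` which is nonrepetitive
up to mod `k`. -/
theorem M_le_two_k_add_ten_sqrt_k (k : ℕ) (hk : 1 ≤ k) (n : ℕ) :
    ∃ s : ℕ → Fin (2 * k + 10 * ⌈Real.sqrt k⌉₊), NonrepetitiveUpToMod k s n := by
  classical
  set r : ℕ := ⌈Real.sqrt k⌉₊ with hr
  set A : ℕ := 2 * k + 10 * r with hA
  haveI : NeZero A := ⟨by omega⟩
  have hr1 : 1 ≤ r := by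
    rw [hr, Nat.one_le_ceil_iff]
    have : (0:ℝ) < (k:ℝ) := by exact_mod_cast hk
    exact Real.sqrt_pos.mpr this
  have hkr : (k : ℝ) ≤ (r : ℝ) ^ 2 := by
    have h1 : Real.sqrt k ≤ (r : ℝ) := Nat.le_ceil _
    have h2 : (0:ℝ) ≤ (k:ℝ) := by positivity
    calc (k : ℝ) = (Real.sqrt k) ^ 2 := (Real.sq_sqrt h2).symm
      _ ≤ (r : ℝ) ^ 2 := by
          apply pow_le_pow_left₀ (Real.sqrt_nonneg _) h1
  set β : ℝ := 2 * (r : ℝ) with hβdef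
  have hβ : 1 < β := by
    rw [hβdef]
    have : (1:ℝ) ≤ (r:ℝ) := by exact_mod_cast hr1
    linarith
  have hAnum : β + 2 * k * (β / (β - 1)) ^ 2 ≤ (Fintype.card (Fin A) : ℝ) := by
    rw [Fintype.card_fin]
    have hrR : (1:ℝ) ≤ (r:ℝ) := by exact_mod_cast hr1
    have hkR : (1:ℝ) ≤ (k:ℝ) := by exact_mod_cast hk
    have hden : (0:ℝ) < β - 1 := by linarith
    have hAcast : (A : ℝ) = 2 * k + 10 * r := by
      rw [hA]; push_cast; ring
    rw [hAcast, hβdef]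
    have hfrac : (2 * (r:ℝ) / (2 * r - 1)) ^ 2 = (2*r)^2 / (2*r-1)^2 := by
      rw [div_pow]
    have h2r1 : (0:ℝ) < 2 * (r:ℝ) - 1 := by linarith
    rw [show (2 * (r:ℝ) - 1) = 2*(r:ℝ)-1 from rfl] at h2r1
    have hstep : 2 * (k:ℝ) * ((2 * (r:ℝ)) / (2 * (r:ℝ) - 1)) ^ 2 ≤ 2 * k + 8 * r := by
      rw [div_pow, ← mul_div_assoc, div_le_iff₀ (by positivity)]
      nlinarith [mul_nonneg (sub_nonneg.mpr hkr) (by linarith : (0:ℝ) ≤ 8 * (r:ℝ) - 2),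
        sq_nonneg ((r:ℝ) - 1), mul_pos (by linarith : (0:ℝ) < (r:ℝ)) h2r1]
    linarith
  obtain ⟨f, hf⟩ := NonrepAux.exists_good (α := Fin A) k n 0 β hβ hAnum
  refine ⟨f, ?_⟩
  intro d i h hd1 hdk hi1 hh1 hlast hcontra
  apply hf d i h hd1 hdk hh1 ?_ hcontra
  intro t ht
  rw [Finset.mem_Icc]
  constructor
  · omega
  · have hmul : t * d ≤ (2 * h - 1) * d := Nat.mul_le_mul_right d (by omega)
    omega
end

section
/- Let (P, L) be a configuration of points and lines with finite maximum incidence I > 2 (each point lies on at most I lines of L), where P is countable and each line contains a discrete linearly ordered set of points of P. If C ≥ 2I + 10⌈√I⌉, then there exists a coloring of P with C colors such that on every line ℓ ∈ L, the sequence of colors of consecutive points of P on ℓ is nonrepetitive. -/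
set_option maxHeartbeats 1000000

open Finset

lemma geom_id (x : ℝ) (N : ℕ) :
    (1-x)^2 * ∑ h ∈ range N, (h+1 : ℝ)*x^h = 1 - (N+1)*x^N + N*x^(N+1) := by
  induction N with
  | zero => simp
  | succ n ih =>
    rw [Finset.sum_range_succ, mul_add, ih]
    push_cast
    ring

lemma geom_bound {x : ℝ} (h0 : 0 ≤ x) (h1 : x < 1) (N : ℕ) :
    ∑ h ∈ range N, (h+1 : ℝ)*x^h ≤ ((1-x)⁻¹)^2 := by
  have hpos : (0:ℝ) < (1-x)^2 := by nlinarith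
  have hx : x^(N+1) ≤ x^N := pow_le_pow_of_le_one h0 h1.le (by omega)
  have key : (1-x)^2 * ∑ h ∈ range N, (h+1 : ℝ)*x^h ≤ 1 := by
    rw [geom_id]
    have h2 : (N:ℝ) * x^(N+1) ≤ (N+1) * x^N := by
      have : (N:ℝ) * x^(N+1) ≤ (N:ℝ) * x^N := by
        apply mul_le_mul_of_nonneg_left hx (by positivity)
      nlinarith [pow_nonneg h0 N]
    linarith
  rw [inv_pow, ← one_div, le_div_iff₀ hpos]
  linarith [key]

lemma sqrt_facts (I : ℕ) (hI : 2 < I) :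
    2 ≤ ⌈Real.sqrt I⌉₊ ∧ (I:ℝ) ≤ (⌈Real.sqrt I⌉₊:ℝ)^2 := by
  have h0 : (0:ℝ) ≤ (I:ℝ) := by positivity
  have hle : Real.sqrt I ≤ (⌈Real.sqrt I⌉₊ : ℝ) := Nat.le_ceil _
  have hsq : (I:ℝ) ≤ (⌈Real.sqrt I⌉₊:ℝ)^2 := by
    nlinarith [Real.sq_sqrt h0, Real.sqrt_nonneg (I:ℝ)]
  refine ⟨?_, hsq⟩
  by_contra hcon
  push_neg at hcon
  have : (⌈Real.sqrt I⌉₊:ℝ) ≤ 1 := by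
    have : ⌈Real.sqrt I⌉₊ ≤ 1 := by omega
    exact_mod_cast this
  have : (I:ℝ) ≤ 1 := by nlinarith
  have : (3:ℝ) ≤ I := by exact_mod_cast hI
  linarith

lemma numeric (I C : ℕ) (hI : 2 < I) (hC : 2*I + 10*⌈Real.sqrt I⌉₊ ≤ C) :
    ((⌈Real.sqrt I⌉₊ : ℝ) + 1) + 2*(I:ℝ)*((1 - ((⌈Real.sqrt I⌉₊ : ℝ)+1)⁻¹)⁻¹)^2 ≤ C := by
  obtain ⟨hs2, hIs⟩ := sqrt_facts I hI
  set s : ℕ := ⌈Real.sqrt I⌉₊ with hs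
  have hsR : (2:ℝ) ≤ s := by exact_mod_cast hs2
  have hspos : (0:ℝ) < s := by linarith
  have h1 : (1 - ((s:ℝ)+1)⁻¹) = s/(s+1) := by field_simp; ring
  have h2 : ((1 - ((s:ℝ)+1)⁻¹)⁻¹)^2 = ((s+1)/s)^2 := by rw [h1, inv_div]
  have hCr : 2*(I:ℝ) + 10*(s:ℝ) ≤ C := by exact_mod_cast hC
  rw [h2]
  have key : 2*(I:ℝ)*(((s:ℝ)+1)/s)^2 ≤ 2*I + 4*s + 2 := by
    rw [div_pow]
    rw [show 2*(I:ℝ)*(((s:ℝ)+1)^2/(s:ℝ)^2) = (2*(I:ℝ)*((s:ℝ)+1)^2)/(s:ℝ)^2 by ring]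
    rw [div_le_iff₀ (by positivity : (0:ℝ) < (s:ℝ)^2)]
    nlinarith [hIs, hsR]
  linarith

section Core
variable {P : Type*} {Λ : Type*} (line : Λ → ℤ → P) {C : ℕ} (d : Fin C)

/-- `c` has no square among points of `S` that are consecutive on a line. -/
def GoodOn (S : Finset P) (c : P → Fin C) : Prop :=
  ∀ l : Λ, ∀ i : ℤ, ∀ h : ℕ, 1 ≤ h → (∀ t : ℕ, t < 2*h → line l (i + t) ∈ S) →
    ∃ t : ℕ, t < h ∧ c (line l (i + t)) ≠ c (line l (i + h + t))

lemma goodOn_anti {S' S : Finset P} {c : P → Fin C} (hss : S' ⊆ S)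
    (hg : GoodOn line S c) : GoodOn line S' c := by
  intro l i h h1 hpts
  exact hg l i h h1 (fun t ht => hss (hpts t ht))

lemma goodOn_congr {S : Finset P} {c c' : P → Fin C}
    (hcc : ∀ p ∈ S, c p = c' p) (hg : GoodOn line S c) : GoodOn line S c' := by
  intro l i h h1 hpts
  obtain ⟨t, ht, hne⟩ := hg l i h h1 hpts
  refine ⟨t, ht, ?_⟩
  have e1 : line l (i + t) ∈ S := hpts t (by omega)
  have e2 : line l (i + h + t) ∈ S := by
    have := hpts (h + t) (by omega)
    rwa [show (i + ((h + t : ℕ) : ℤ)) = i + h + t by push_cast; ring] at this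
  rw [← hcc _ e1, ← hcc _ e2]
  exact hne

/-- Colorings of `S` (extended by `d` off `S`) that are square-free on `S`. -/
def colS (S : Finset P) : Set (P → Fin C) :=
  {c | GoodOn line S c ∧ ∀ p ∉ S, c p = d}

lemma colS_finite (S : Finset P) : (colS line d S).Finite := by
  classical
  rw [Set.finite_coe_iff.symm]
  have : Function.Injective (fun c : (colS line d S) => (fun p : S => c.1 p.1)) := by
    intro c₁ c₂ hcc
    apply Subtype.ext
    funext p
    by_cases hp : p ∈ S
    · simpa using congrFun hcc ⟨p, hp⟩
    · rw [c₁.2.2 p hp, c₂.2.2 p hp]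
  exact Finite.of_injective _ this

/-- The number of square-free colorings of `S`. -/
noncomputable def Anum (S : Finset P) : ℕ := (colS line d S).ncard

lemma Anum_empty : Anum line d (∅ : Finset P) = 1 := by
  have : colS line d (∅ : Finset P) = {fun _ => d} := by
    ext c
    constructor
    · intro hc
      funext p
      exact hc.2 p (by simp)
    · rintro rfl
      refine ⟨?_, fun p _ => rfl⟩
      intro l i h h1 hpts
      exact absurd (hpts 0 (by omega)) (by simp)
  rw [Anum, this, Set.ncard_singleton]

end Core

lemma supp_finite {P : Type*} {C : ℕ} (d : Fin C) (S : Finset P)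
    (Q : (P → Fin C) → Prop) : {c : P → Fin C | Q c ∧ ∀ p ∉ S, c p = d}.Finite := by
  classical
  rw [Set.finite_coe_iff.symm]
  have : Function.Injective
      (fun c : {c : P → Fin C | Q c ∧ ∀ p ∉ S, c p = d} => (fun p : S => c.1 p.1)) := by
    intro c₁ c₂ hcc
    apply Subtype.ext
    funext p
    by_cases hp : p ∈ S
    · simpa using congrFun hcc ⟨p, hp⟩
    · rw [c₁.2.2 p hp, c₂.2.2 p hp]
  exact Finite.of_injective _ this

lemma ncard_finset_biUnion_le {α : Type*} {ι : Type*} (s : Finset ι) (f : ι → Set α)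
    (hf : ∀ i ∈ s, (f i).Finite) :
    (⋃ i ∈ s, f i).ncard ≤ ∑ i ∈ s, (f i).ncard := by
  classical
  induction s using Finset.induction with
  | empty => simp
  | @insert a s ha IH =>
    rw [Finset.set_biUnion_insert, Finset.sum_insert ha]
    refine le_trans (Set.ncard_union_le _ _) ?_
    exact add_le_add le_rfl (IH (fun i hi => hf i (Finset.mem_insert_of_mem hi)))

lemma main_step {P : Type*} [DecidableEq P] {Λ : Type*} (line : Λ → ℤ → P)
    (hinj : ∀ l, Function.Injective (line l))
    (I : ℕ) (hI : 2 < I)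
    (hinc : ∀ p : P, (Set.Finite {l : Λ | ∃ z : ℤ, line l z = p}) ∧
      Nat.card {l : Λ | ∃ z : ℤ, line l z = p} ≤ I)
    {C : ℕ} (d : Fin C) (hC : 2 * I + 10 * ⌈Real.sqrt I⌉₊ ≤ C) :
    ∀ (n : ℕ) (S : Finset P) (v : P), v ∉ S → (insert v S).card ≤ n →
      (⌈Real.sqrt I⌉₊ + 1) * Anum line d S ≤ Anum line d (insert v S) := by
  intro n
  induction n with
  | zero =>
    intro S v hv hcard
    rw [Finset.card_insert_of_notMem hv] at hcard
    omega
  | succ n IH =>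
    intro S v hv hcard
    set s : ℕ := ⌈Real.sqrt I⌉₊ with hs_def
    set β : ℕ := s + 1 with hβ_def
    set T : Finset P := insert v S with hT_def
    have hTcard : T.card = S.card + 1 := Finset.card_insert_of_notMem hv
    -- the peel lemma
    have peel : ∀ (D : Finset P), D ⊆ S → β ^ D.card * Anum line d (S \ D) ≤ Anum line d S := by
      intro D
      induction D using Finset.induction with
      | empty => simp
      | @insert a D ha IHD =>
        intro haD
        have haS : a ∈ S := haD (Finset.mem_insert_self a D)
        have hDS : D ⊆ S := fun x hx => haD (Finset.mem_insert_of_mem hx)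
        have hmem : a ∈ S \ D := Finset.mem_sdiff.2 ⟨haS, ha⟩
        have hrw : S \ insert a D = (S \ D).erase a := by
          ext x; simp [Finset.mem_sdiff, Finset.mem_erase, Finset.mem_insert]; tauto
        have hins : insert a ((S \ D).erase a) = S \ D := Finset.insert_erase hmem
        have hstep : β * Anum line d ((S \ D).erase a) ≤ Anum line d (S \ D) := by
          have h2 : (insert a ((S \ D).erase a)).card ≤ n := by
            rw [hins]
            calc (S \ D).card ≤ S.card := Finset.card_le_card (Finset.sdiff_subset)
            _ ≤ n := by omega
          have h3 := IH ((S \ D).erase a) a (Finset.notMem_erase a _) h2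
          rwa [hins] at h3
        calc β ^ (insert a D).card * Anum line d (S \ insert a D)
            = β ^ D.card * (β * Anum line d ((S \ D).erase a)) := by
              rw [Finset.card_insert_of_notMem ha, hrw]; ring
          _ ≤ β ^ D.card * Anum line d (S \ D) :=
              Nat.mul_le_mul_left _ hstep
          _ ≤ Anum line d S := IHD hDS
    -- W : colorings of T that are good on S
    set W : Set (P → Fin C) := {c | GoodOn line S c ∧ ∀ p ∉ T, c p = d} with hW_def
    have hWfin : W.Finite := supp_finite d T _
    have hWcard : W.ncard = C * Anum line d S := by
      have e : W ≃ Fin C × (colS line d S) := by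
        refine ⟨fun c => ⟨c.1 v, ⟨Function.update c.1 v d, ?_, ?_⟩⟩,
                fun ac => ⟨Function.update ac.2.1 v ac.1, ?_, ?_⟩, ?_, ?_⟩
        · refine goodOn_congr line (fun p hp => ?_) c.2.1
          exact (Function.update_of_ne (fun he : p = v => hv (he ▸ hp)) d c.1).symm
        · intro p hp
          by_cases hpv : p = v
          · rw [hpv, Function.update_self]
          · rw [Function.update_of_ne hpv]
            exact c.2.2 p (by rw [hT_def, Finset.mem_insert]; tauto)
        · refine goodOn_congr line (fun p hp => ?_) ac.2.2.1
          exact (Function.update_of_ne (fun he : p = v => hv (he ▸ hp)) ac.1 ac.2.1).symm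
        · intro p hp
          rw [hT_def, Finset.mem_insert] at hp
          push_neg at hp
          rw [Function.update_of_ne hp.1]
          exact ac.2.2.2 p hp.2
        · intro c
          apply Subtype.ext
          simp only [Function.update_idem]
          exact Function.update_eq_self v c.1
        · intro ac
          refine Prod.ext (Function.update_self v ac.1 ac.2.1) (Subtype.ext ?_)
          simp only [Function.update_idem]
          have hd : d = ac.2.1 v := (ac.2.2.2 v hv).symm
          calc Function.update (ac.2.1) v d = Function.update (ac.2.1) v (ac.2.1 v) := by rw [← hd]
            _ = ac.2.1 := Function.update_eq_self v ac.2.1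
      calc W.ncard = Nat.card W := (Nat.card_coe_set_eq _).symm
        _ = Nat.card (Fin C × colS line d S) := Nat.card_congr e
        _ = C * Anum line d S := by
            rw [Nat.card_prod, Nat.card_eq_fintype_card, Fintype.card_fin,
              Nat.card_coe_set_eq]
            rfl
    -- bad colorings
    set B : Set (P → Fin C) := {c | c ∈ W ∧ ¬ GoodOn line T c} with hB_def
    have hBsubW : B ⊆ W := fun c hc => hc.1
    have hBfin : B.Finite := hWfin.subset hBsubW
    have hAT : C * Anum line d S ≤ Anum line d T + B.ncard := by
      have hsub : W ⊆ (W \ B) ∪ B := by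
        intro c hc
        by_cases h : c ∈ B
        · exact Or.inr h
        · exact Or.inl ⟨hc, h⟩
      have h1 : W.ncard ≤ (W \ B).ncard + B.ncard :=
        le_trans (Set.ncard_le_ncard hsub (hWfin.diff.union hBfin))
          (Set.ncard_union_le _ _)
      have h2 : (W \ B) ⊆ colS line d T := by
        rintro c ⟨hcW, hcB⟩
        refine ⟨?_, hcW.2⟩
        by_contra hg
        exact hcB ⟨hcW, hg⟩
      have h3 : (W \ B).ncard ≤ Anum line d T :=
        Set.ncard_le_ncard h2 (colS_finite _ _ _)
      rw [← hWcard]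
      omega
    -- lines through v
    set zl : Λ → ℤ := fun l => @dite _ (∃ z : ℤ, line l z = v) (Classical.dec _) (fun h => h.choose) (fun _ => 0) with hzl_def
    have hzl : ∀ l : Λ, (∃ z : ℤ, line l z = v) → line l (zl l) = v := by
      intro l hl
      rw [hzl_def]
      simp only [dif_pos hl]
      exact hl.choose_spec
    set Lv : Finset Λ := (hinc v).1.toFinset with hLv_def
    have hLv_mem : ∀ l : Λ, l ∈ Lv ↔ ∃ z : ℤ, line l z = v := by
      intro l
      rw [hLv_def, Set.Finite.mem_toFinset]
      rfl
    have hLv_card : Lv.card ≤ I := by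
      have h4 := (hinc v).2
      rwa [Nat.card_coe_set_eq, Set.ncard_eq_toFinset_card _ (hinc v).1] at h4
    set N : ℕ := T.card with hN_def
    set Bq : Λ → ℕ → ℕ → Set (P → Fin C) := fun l k t₀ =>
      {c | c ∈ W ∧ (∀ t : ℕ, t < 2*(k+1) → line l (zl l - t₀ + t) ∈ T) ∧
        ∀ t : ℕ, t < k+1 →
          c (line l (zl l - t₀ + t)) = c (line l (zl l - t₀ + (k+1) + t))} with hBq_def
    have hBqsub : ∀ l k t₀, Bq l k t₀ ⊆ W := fun l k t₀ c hc => hc.1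
    -- coverage
    have cover : B ⊆ ⋃ l ∈ Lv, ⋃ k ∈ Finset.range N, ⋃ t₀ ∈ Finset.range (2*(k+1)), Bq l k t₀ := by
      rintro c ⟨hcW, hcG⟩
      rw [GoodOn] at hcG
      push_neg at hcG
      obtain ⟨l, i, h, h1, hpts, heq⟩ := hcG
      have hv_on : ∃ t₀ : ℕ, t₀ < 2*h ∧ line l (i + t₀) = v := by
        by_contra hno
        push_neg at hno
        have hptsS : ∀ t : ℕ, t < 2*h → line l (i+t) ∈ S := by
          intro t ht
          have h5 := hpts t ht
          rw [hT_def, Finset.mem_insert] at h5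
          rcases h5 with h5 | h5
          · exact absurd h5 (hno t ht)
          · exact h5
        obtain ⟨t, ht, hne⟩ := hcW.1 l i h h1 hptsS
        exact hne (heq t ht)
      obtain ⟨t₀, ht₀, hvt₀⟩ := hv_on
      have hlin : l ∈ Lv := (hLv_mem l).2 ⟨i + t₀, hvt₀⟩
      have hzeq : zl l = i + t₀ := hinj l (by rw [hzl l ⟨i + t₀, hvt₀⟩, hvt₀])
      have h2hN : 2*h ≤ N := by
        have himg : ((Finset.range (2*h)).image (fun t : ℕ => line l (i + t))) ⊆ T := by
          intro x hx
          rw [Finset.mem_image] at hx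
          obtain ⟨t, ht, rfl⟩ := hx
          exact hpts t (Finset.mem_range.1 ht)
        have hcardimg : ((Finset.range (2*h)).image (fun t : ℕ => line l (i + t))).card = 2*h := by
          rw [Finset.card_image_of_injOn, Finset.card_range]
          intro t _ t' _ hee
          have h6 : i + (t:ℤ) = i + (t':ℤ) := hinj l hee
          omega
        rw [← hcardimg]
        exact Finset.card_le_card himg
      have hieq : zl l - (t₀:ℤ) = i := by omega
      have hk1 : h - 1 + 1 = h := by omega
      simp only [Set.mem_iUnion]
      refine ⟨l, hlin, h-1, Finset.mem_range.2 (by omega), t₀, Finset.mem_range.2 (by omega), ?_⟩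
      have hcast : ((h-1 : ℕ) : ℤ) + 1 = (h : ℤ) := by omega
      refine ⟨hcW, ?_, ?_⟩
      · intro t ht
        rw [hieq]
        exact hpts t (by omega)
      · intro t ht
        rw [hieq, hcast]
        exact heq t (by omega)
    -- counting the bad colorings
    have hBcount : B.ncard ≤
        ∑ l ∈ Lv, ∑ k ∈ Finset.range N, ∑ t₀ ∈ Finset.range (2*(k+1)), (Bq l k t₀).ncard := by
      have hfin1 : ∀ l k t₀, (Bq l k t₀).Finite := fun l k t₀ => hWfin.subset (hBqsub l k t₀)
      have hfin2 : (⋃ l ∈ Lv, ⋃ k ∈ Finset.range N, ⋃ t₀ ∈ Finset.range (2*(k+1)), Bq l k t₀).Finite := by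
        apply Set.Finite.biUnion (Lv.finite_toSet)
        intro l _
        apply Set.Finite.biUnion ((Finset.range N).finite_toSet)
        intro k _
        apply Set.Finite.biUnion ((Finset.range (2*(k+1))).finite_toSet)
        intro t₀ _
        exact hfin1 l k t₀
      refine le_trans (Set.ncard_le_ncard cover hfin2) ?_
      refine le_trans (ncard_finset_biUnion_le Lv _ ?_) (Finset.sum_le_sum ?_)
      · intro l _
        apply Set.Finite.biUnion ((Finset.range N).finite_toSet)
        intro k _
        apply Set.Finite.biUnion ((Finset.range (2*(k+1))).finite_toSet)
        intro t₀ _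
        exact hfin1 l k t₀
      intro l _
      refine le_trans (ncard_finset_biUnion_le _ _ ?_) (Finset.sum_le_sum ?_)
      · intro k _
        apply Set.Finite.biUnion ((Finset.range (2*(k+1))).finite_toSet)
        intro t₀ _
        exact hfin1 l k t₀
      intro k _
      exact ncard_finset_biUnion_le _ _ (fun t₀ _ => hfin1 l k t₀)
    -- the key per-square bound
    have key : ∀ l ∈ Lv, ∀ k : ℕ, ∀ t₀ : ℕ, t₀ < 2*(k+1) →
        β ^ k * (Bq l k t₀).ncard ≤ Anum line d S := by
      intro l hl k t₀ ht₀
      rcases (Bq l k t₀).eq_empty_or_nonempty with hemp | ⟨c₀, hc₀⟩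
      · rw [hemp]
        simp
      obtain ⟨hc₀W, hc₀pts, hc₀eq⟩ := hc₀
      set i : ℤ := zl l - t₀ with hi_def
      have hlv : line l (zl l) = v := hzl l ((hLv_mem l).1 hl)
      have hvt₀ : line l (i + t₀) = v := by
        rw [show i + (t₀:ℤ) = zl l by omega, hlv]
      have hpts : ∀ t : ℕ, t < 2*(k+1) → line l (i + t) ∈ T := hc₀pts
      set σ : ℕ := if t₀ < k+1 then 0 else k+1 with hσ_def
      set σ' : ℕ := if t₀ < k+1 then k+1 else 0 with hσ'_def
      have hσfacts : (σ = 0 ∧ σ' = k+1 ∧ t₀ < k+1) ∨ (σ = k+1 ∧ σ' = 0 ∧ k+1 ≤ t₀) := by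
        rw [hσ_def, hσ'_def]
        by_cases hcc : t₀ < k+1
        · left
          simp [hcc]
        · right
          simp [hcc]
          omega
      have hσle : σ ≤ t₀ := by omega
      have hσlt : t₀ - σ < k+1 := by omega
      -- the mirror property
      have hmirror : ∀ c ∈ Bq l k t₀, ∀ t : ℕ, t < k+1 →
          c (line l (i + σ + t)) = c (line l (i + σ' + t)) := by
        intro c hc t ht
        obtain ⟨-, -, hceq⟩ := hc
        rcases hσfacts with ⟨h0, h1, -⟩ | ⟨h0, h1, -⟩
        · rw [show (σ:ℤ) = 0 by omega, show (σ':ℤ) = (k:ℤ)+1 by omega,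
            show i + 0 + (t:ℤ) = i + t by ring]
          exact hceq t ht
        · rw [show (σ:ℤ) = (k:ℤ)+1 by omega, show (σ':ℤ) = 0 by omega,
            show i + 0 + (t:ℤ) = i + t by ring]
          exact (hceq t ht).symm
      -- the half containing v, with v removed
      set D : Finset P := ((Finset.range (k+1)).image (fun t : ℕ => line l (i + σ + t))).erase v
        with hD_def
      have hvD : v ∈ (Finset.range (k+1)).image (fun t : ℕ => line l (i + σ + t)) := by
        rw [Finset.mem_image]
        refine ⟨t₀ - σ, Finset.mem_range.2 hσlt, ?_⟩
        rw [show i + (σ:ℤ) + ((t₀ - σ : ℕ):ℤ) = i + t₀ by omega, hvt₀]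
      have hDcard : D.card = k := by
        rw [hD_def, Finset.card_erase_of_mem hvD, Finset.card_image_of_injOn, Finset.card_range]
        · omega
        · intro t _ t' _ he
          have h6 := hinj l he
          omega
      have hσhalf : σ ≤ k+1 ∧ σ' ≤ k+1 := by omega
      have hDsub : D ⊆ S := by
        intro x hx
        rw [hD_def, Finset.mem_erase, Finset.mem_image] at hx
        obtain ⟨hxv, t, htr, rfl⟩ := hx
        have htlt := Finset.mem_range.1 htr
        have hxT : line l (i + σ + t) ∈ T := by
          have h7 := hpts (σ + t) (by omega)
          rwa [show i + ((σ + t : ℕ):ℤ) = i + σ + t by push_cast; ring] at h7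
        rw [hT_def, Finset.mem_insert] at hxT
        tauto
      -- the resetting injection
      set g : (P → Fin C) → (P → Fin C) := fun c p => if p ∈ S \ D then c p else d with hg_def
      have hmaps : ∀ c ∈ Bq l k t₀, g c ∈ colS line d (S \ D) := by
        intro c hc
        obtain ⟨hcW, -, -⟩ := hc
        constructor
        · refine goodOn_congr line (fun p hp => ?_) (goodOn_anti line Finset.sdiff_subset hcW.1)
          rw [hg_def]
          simp [hp]
        · intro p hp
          rw [hg_def]
          simp [hp]
      have hinjOn : Set.InjOn g (Bq l k t₀) := by
        intro c₁ hc₁ c₂ hc₂ hg12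
        funext p
        by_cases hp1 : p ∈ S \ D
        · have h8 := congrFun hg12 p
          rw [hg_def] at h8
          simpa [hp1] using h8
        by_cases hp2 : p ∈ T
        case neg =>
          rw [hc₁.1.2 p hp2, hc₂.1.2 p hp2]
        case pos =>
          have hrep : ∃ t : ℕ, t < k+1 ∧ p = line l (i + σ + t) := by
            by_cases hpv : p = v
            · exact ⟨t₀ - σ, hσlt,
                by rw [hpv, show i + (σ:ℤ) + ((t₀ - σ : ℕ):ℤ) = i + t₀ by omega, hvt₀]⟩
            · have hpS : p ∈ S := by
                rw [hT_def, Finset.mem_insert] at hp2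
                tauto
              have hpD : p ∈ D := by
                by_contra hnd
                exact hp1 (Finset.mem_sdiff.2 ⟨hpS, hnd⟩)
              rw [hD_def, Finset.mem_erase, Finset.mem_image] at hpD
              obtain ⟨-, t, htr, hteq⟩ := hpD
              exact ⟨t, Finset.mem_range.1 htr, hteq.symm⟩
          obtain ⟨t, ht, rfl⟩ := hrep
          have hmT : line l (i + σ' + t) ∈ T := by
            have h9 := hpts (σ' + t) (by omega)
            rwa [show i + ((σ' + t : ℕ):ℤ) = i + σ' + t by push_cast; ring] at h9
          have hmv : line l (i + σ' + t) ≠ v := by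
            intro he
            have h10 : i + (σ':ℤ) + t = i + t₀ := hinj l (by rw [he, hvt₀])
            omega
          have hmD : line l (i + σ' + t) ∉ D := by
            intro hin
            rw [hD_def, Finset.mem_erase, Finset.mem_image] at hin
            obtain ⟨-, t'', htr'', he⟩ := hin
            have ht'' := Finset.mem_range.1 htr''
            have h11 := hinj l he
            omega
          have hmS : line l (i + σ' + t) ∈ S := by
            have := hmT
            rw [hT_def, Finset.mem_insert] at this
            tauto
          have hm : line l (i + σ' + t) ∈ S \ D := Finset.mem_sdiff.2 ⟨hmS, hmD⟩
          have e₁ := hmirror c₁ hc₁ t ht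
          have e₂ := hmirror c₂ hc₂ t ht
          have e₃ := congrFun hg12 (line l (i + σ' + t))
          rw [hg_def] at e₃
          simp only [hm, if_pos] at e₃
          rw [e₁, e₂]
          exact e₃
      have hcount : (Bq l k t₀).ncard ≤ Anum line d (S \ D) :=
        Set.ncard_le_ncard_of_injOn g hmaps hinjOn (colS_finite _ _ _)
      calc β ^ k * (Bq l k t₀).ncard ≤ β ^ k * Anum line d (S \ D) :=
            Nat.mul_le_mul_left _ hcount
        _ = β ^ D.card * Anum line d (S \ D) := by rw [hDcard]
        _ ≤ Anum line d S := peel D hDsub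
    -- put everything together over ℝ
    have hs2 : 2 ≤ s := by rw [hs_def]; exact (sqrt_facts I hI).1
    have hβcast : (β:ℝ) = (s:ℝ) + 1 := by rw [hβ_def]; push_cast; ring
    have hβpos : (0:ℝ) < (β:ℝ) := by rw [hβcast]; positivity
    set x : ℝ := ((β:ℝ))⁻¹ with hx_def
    have hx0 : (0:ℝ) ≤ x := by positivity
    have hx1 : x < 1 := by
      rw [hx_def, inv_lt_one_iff₀]
      right
      rw [hβcast]
      have : (2:ℝ) ≤ (s:ℝ) := by exact_mod_cast hs2
      linarith
    set AR : ℝ := (Anum line d S : ℝ) with hAR_def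
    have hA0 : (0:ℝ) ≤ AR := by rw [hAR_def]; positivity
    have hterm : ∀ l ∈ Lv, ∀ k : ℕ, ∀ t₀ : ℕ, t₀ < 2*(k+1) →
        ((Bq l k t₀).ncard : ℝ) ≤ AR * x ^ k := by
      intro l hl k t₀ ht₀
      have h12 := key l hl k t₀ ht₀
      have h13 : ((β:ℝ))^k * ((Bq l k t₀).ncard:ℝ) ≤ AR := by
        rw [hAR_def]
        exact_mod_cast h12
      have hxβ : (β:ℝ)^k * x^k = 1 := by
        rw [hx_def, ← mul_pow, mul_inv_cancel₀ (ne_of_gt hβpos), one_pow]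
      calc ((Bq l k t₀).ncard:ℝ) = ((β:ℝ)^k * ((Bq l k t₀).ncard:ℝ)) * x^k := by
            rw [mul_comm ((β:ℝ)^k) _, mul_assoc, hxβ, mul_one]
        _ ≤ AR * x^k := mul_le_mul_of_nonneg_right h13 (pow_nonneg hx0 k)
    have hsum2 : ∀ l ∈ Lv, ∑ k ∈ Finset.range N, ∑ t₀ ∈ Finset.range (2*(k+1)),
        ((Bq l k t₀).ncard:ℝ) ≤ 2*((1-x)⁻¹)^2*AR := by
      intro l hl
      calc ∑ k ∈ Finset.range N, ∑ t₀ ∈ Finset.range (2*(k+1)), ((Bq l k t₀).ncard:ℝ)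
          ≤ ∑ k ∈ Finset.range N, (2*((k:ℝ)+1)) * (AR * x^k) := by
            refine Finset.sum_le_sum (fun k hk => ?_)
            calc ∑ t₀ ∈ Finset.range (2*(k+1)), ((Bq l k t₀).ncard:ℝ)
                ≤ ∑ t₀ ∈ Finset.range (2*(k+1)), AR * x^k :=
                  Finset.sum_le_sum (fun t₀ ht₀ => hterm l hl k t₀ (Finset.mem_range.1 ht₀))
              _ = (2*((k:ℝ)+1)) * (AR * x^k) := by
                  rw [Finset.sum_const, Finset.card_range, nsmul_eq_mul]
                  push_cast
                  ring
        _ = 2*AR*∑ k ∈ Finset.range N, ((k:ℝ)+1)*x^k := by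
            rw [Finset.mul_sum]
            refine Finset.sum_congr rfl (fun k _ => by ring)
        _ ≤ 2*AR*((1-x)⁻¹)^2 := by
            apply mul_le_mul_of_nonneg_left (geom_bound hx0 hx1 N) (by positivity)
        _ = 2*((1-x)⁻¹)^2*AR := by ring
    have hy0 : (0:ℝ) ≤ ((1-x)⁻¹)^2 := sq_nonneg _
    have hBr : (B.ncard:ℝ) ≤ 2*(I:ℝ)*((1-x)⁻¹)^2*AR := by
      calc (B.ncard:ℝ)
          ≤ ∑ l ∈ Lv, ∑ k ∈ Finset.range N, ∑ t₀ ∈ Finset.range (2*(k+1)),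
            ((Bq l k t₀).ncard:ℝ) := by exact_mod_cast hBcount
        _ ≤ ∑ l ∈ Lv, 2*((1-x)⁻¹)^2*AR := Finset.sum_le_sum hsum2
        _ = (Lv.card:ℝ) * (2*((1-x)⁻¹)^2*AR) := by
            rw [Finset.sum_const, nsmul_eq_mul]
        _ ≤ (I:ℝ) * (2*((1-x)⁻¹)^2*AR) := by
            apply mul_le_mul_of_nonneg_right _ (by positivity)
            exact_mod_cast hLv_card
        _ = 2*(I:ℝ)*((1-x)⁻¹)^2*AR := by ring
    have hnum' : (β:ℝ) + 2*(I:ℝ)*((1-x)⁻¹)^2 ≤ (C:ℝ) := by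
      have hnum := numeric I C hI hC
      rw [hβcast, hx_def, hβcast]
      rw [hs_def]
      exact hnum
    have hATr : (C:ℝ) * AR ≤ (Anum line d T : ℝ) + (B.ncard:ℝ) := by
      rw [hAR_def]
      exact_mod_cast hAT
    have hmul' := mul_le_mul_of_nonneg_right hnum' hA0
    rw [add_mul] at hmul'
    have hfinal : (β:ℝ) * AR ≤ (Anum line d T : ℝ) := by nlinarith [hmul', hATr, hBr]
    rw [hAR_def] at hfinal
    exact_mod_cast hfinal

lemma Anum_pos {P : Type*} [DecidableEq P] {Λ : Type*} (line : Λ → ℤ → P)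
    (hinj : ∀ l, Function.Injective (line l))
    (I : ℕ) (hI : 2 < I)
    (hinc : ∀ p : P, (Set.Finite {l : Λ | ∃ z : ℤ, line l z = p}) ∧
      Nat.card {l : Λ | ∃ z : ℤ, line l z = p} ≤ I)
    {C : ℕ} (d : Fin C) (hC : 2 * I + 10 * ⌈Real.sqrt I⌉₊ ≤ C) :
    ∀ S : Finset P, 0 < Anum line d S := by
  intro S
  induction S using Finset.induction with
  | empty => rw [Anum_empty]; norm_num
  | @insert a S ha IH =>
    have h1 := main_step line hinj I hI hinc d hC (insert a S).card S a ha le_rfl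
    have h2 : 0 < (⌈Real.sqrt I⌉₊ + 1) * Anum line d S := Nat.mul_pos (by omega) IH
    omega

/-- Theorem 3: let `P` be a countable set of points and let the lines be an
abstract family of injective maps `ℤ → P` (listing the consecutive points of
the discrete point set on each line). If every point lies on at most `I` lines
with `I > 2` finite, and `C ≥ 2I + 10⌈√I⌉`, then there is a `C`-coloring of
the points such that the sequence of colors along every line is
nonrepetitive. -/
theorem nonrepetitive_coloring_of_configuration
    {P : Type*} [Countable P] {Λ : Type*} (line : Λ → ℤ → P)
    (hinj : ∀ l, Function.Injective (line l))
    (I : ℕ) (hI : 2 < I)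
    (hinc : ∀ p : P, (Set.Finite {l : Λ | ∃ z : ℤ, line l z = p}) ∧
      Nat.card {l : Λ | ∃ z : ℤ, line l z = p} ≤ I)
    (C : ℕ) (hC : 2 * I + 10 * ⌈Real.sqrt I⌉₊ ≤ C) :
    ∃ c : P → Fin C, ∀ l : Λ, ∀ (i : ℤ) (h : ℕ), 1 ≤ h →
      ¬ ∀ t : ℕ, t < h → c (line l (i + t)) = c (line l (i + h + t)) := by
  classical
  by_cases hP : Nonempty P
  case neg =>
    refine ⟨fun p => absurd ⟨p⟩ hP, fun l => absurd ⟨line l 0⟩ hP⟩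
  case pos =>
  have hC0 : 0 < C :=
    Nat.lt_of_lt_of_le (show 0 < 2*I + 10*⌈Real.sqrt I⌉₊ by
      have : 0 < I := by omega
      omega) hC
  set d : Fin C := ⟨0, hC0⟩ with hd_def
  obtain ⟨f, hf⟩ := exists_surjective_nat P
  set Sn : ℕ → Finset P := fun n => (Finset.range n).image f with hSn_def
  have hgood : ∀ n, ∃ c : P → Fin C, c ∈ colS line d (Sn n) := by
    intro n
    have hpos : 0 < Anum line d (Sn n) := Anum_pos line hinj I hI hinc d hC (Sn n)
    rw [Anum] at hpos
    exact Set.nonempty_of_ncard_ne_zero (by omega)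
  choose cn hcn using hgood
  set U : Ultrafilter ℕ := Ultrafilter.of Filter.atTop with hU_def
  have hU : (U : Filter ℕ) ≤ Filter.atTop := Ultrafilter.of_le _
  have hlim : ∀ p : P, ∃ a : Fin C, {n | cn n p = a} ∈ U := by
    intro p
    obtain ⟨a, -, hpu⟩ := Ultrafilter.eq_pure_of_finite_mem
      (Set.finite_univ (α := Fin C)) (Filter.univ_mem (f := (U.map (fun n => cn n p) : Filter (Fin C))))
    refine ⟨a, ?_⟩
    have h1 : {a} ∈ U.map (fun n => cn n p) := by
      rw [hpu]
      exact Filter.mem_pure.2 rfl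
    have h2 : (fun n => cn n p) ⁻¹' {a} ∈ U := h1
    simpa [Set.preimage, Set.mem_singleton_iff] using h2
  choose c hc using hlim
  refine ⟨c, ?_⟩
  intro l i h h1 habs
  have hfin : ∀ t : ℕ, ∃ m : ℕ, f m = line l (i + t) := fun t => hf _
  choose m hm using hfin
  set N₀ : ℕ := (Finset.range (2*h)).sup m + 1 with hN₀_def
  have hmem : ∀ t, t < 2*h → ∀ n, N₀ ≤ n → line l (i + t) ∈ Sn n := by
    intro t ht n hn
    rw [hSn_def]
    simp only [Finset.mem_image]
    refine ⟨m t, Finset.mem_range.2 ?_, hm t⟩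
    have := Finset.le_sup (f := m) (Finset.mem_range.2 ht)
    omega
  have hUset : ({n | N₀ ≤ n} ∩
      ⋂ t ∈ Finset.range (2*h), {n | cn n (line l (i + t)) = c (line l (i + t))}) ∈ U := by
    apply Filter.inter_mem
    · exact hU (Filter.mem_atTop N₀)
    · exact (Filter.biInter_finset_mem _).2 (fun t _ => hc (line l (i + t)))
  obtain ⟨n, hnN, hnc⟩ := U.nonempty_of_mem hUset
  simp only [Set.mem_iInter, Finset.mem_range, Set.mem_setOf_eq] at hnc
  have hgood_n := (hcn n).1
  obtain ⟨t, ht, hne⟩ := hgood_n l i h h1 (fun t ht => hmem t ht n hnN)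
  apply hne
  have e1 : cn n (line l (i+t)) = c (line l (i+t)) := hnc t (by omega)
  have e2 : cn n (line l (i+h+t)) = c (line l (i+h+t)) := by
    have := hnc (h+t) (by omega)
    rwa [show (i + ((h+t : ℕ):ℤ)) = i + h + t by push_cast; ring] at this
  rw [e1, e2]
  exact habs t ht
end
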